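/- arXiv:2510.23365 — 3 statements merged into one kernel-verified Lean document; each statement's English description precedes it below -/
import Mathlib

section
/- Let Z = X₁ × ⋯ × X_r be a product of proper geodesic CAT(−1) spaces and Γ < Isom(Z) a non-elementary transverse subgroup. Then for every (ξ,u) ∈ H = ∂Z × ℝ^r with ξ ∉ Λ(Γ), the orbit Γ·(ξ,u) is closed in H. -/
/-!
Core definitions: proper geodesic CAT(−1) spaces, geodesic segments,
nearest-point projections, horofunction (= Gromov) boundary.
-/

noncomputable section

open Real Set Metric Filter Topology
open scoped ENNReal NNReal

/-- Inverse hyperbolic cosine. -/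
def arcosh (x : ℝ) : ℝ := Real.log (x + Real.sqrt (x ^ 2 - 1))

/-- Cosine of the angle, at the common vertex, of the ℍ²-comparison triangle whose two
sides adjacent to this vertex have lengths `a`, `b` and whose opposite side has length `c`
(hyperbolic law of cosines). -/
def cmpCos (a b c : ℝ) : ℝ :=
  (Real.cosh a * Real.cosh b - Real.cosh c) / (Real.sinh a * Real.sinh b)

/-- The distance, in the ℍ²-comparison triangle with side lengths `a`, `b` adjacent to the
common vertex and opposite side length `c`, between the comparison points at arclength
parameters `s` (on the side of length `a`) and `t` (on the side of length `b`). -/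
def cmpDist (a b c s t : ℝ) : ℝ :=
  _root_.arcosh (Real.cosh s * Real.cosh t - Real.sinh s * Real.sinh t * cmpCos a b c)

/-- A choice of geodesics in a metric space: `geo x y` is an arclength parametrization on
`[0, dist x y]` of a geodesic from `x` to `y`.  A metric space admitting such a structure
is a geodesic space. -/
structure GeodesicStructure (X : Type*) [MetricSpace X] where
  geo : X → X → ℝ → X
  geo_zero : ∀ x y, geo x y 0 = x
  geo_end : ∀ x y, geo x y (dist x y) = y
  geo_isom : ∀ x y, ∀ s ∈ Set.Icc (0 : ℝ) (dist x y), ∀ t ∈ Set.Icc (0 : ℝ) (dist x y),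
    dist (geo x y s) (geo x y t) = |s - t|

/-- The geodesic segment `[x, y]`. -/
def GeodesicStructure.seg {X : Type*} [MetricSpace X] (G : GeodesicStructure X) (x y : X) :
    Set X :=
  G.geo x y '' Set.Icc 0 (dist x y)

/-- The CAT(−1) comparison property: every geodesic triangle is at least as thin as its
comparison triangle in the hyperbolic plane ℍ². -/
def GeodesicStructure.IsCATNegOne {X : Type*} [MetricSpace X] (G : GeodesicStructure X) :
    Prop :=
  ∀ x y z : X, ∀ s ∈ Set.Icc (0 : ℝ) (dist x y), ∀ t ∈ Set.Icc (0 : ℝ) (dist x z),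
    dist (G.geo x y s) (G.geo x z t) ≤ cmpDist (dist x y) (dist x z) (dist y z) s t

/-- `p` is a nearest point to `x` in the set `s` (a nearest-point projection of `x`). -/
def IsNearestPt {X : Type*} [MetricSpace X] (s : Set X) (x p : X) : Prop :=
  p ∈ s ∧ ∀ q ∈ s, dist x p ≤ dist x q

/-- A (possibly noncompact) geodesic subset of `X`: the isometric image of an interval. -/
def IsGeodesicSet {X : Type*} [MetricSpace X] (γ : Set X) : Prop :=
  ∃ (I : Set ℝ) (f : ℝ → X), I.OrdConnected ∧
    (∀ s ∈ I, ∀ t ∈ I, dist (f s) (f t) = |s - t|) ∧ γ = f '' I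

/-- A bi-infinite geodesic parametrized by arclength. -/
def IsGeodesicLine {X : Type*} [MetricSpace X] (γ : ℝ → X) : Prop :=
  ∀ s t : ℝ, dist (γ s) (γ t) = |s - t|

/-- The set of nearest-point projections to `γ` of points of `S`. -/
def projSet {X : Type*} [MetricSpace X] (γ : Set X) (S : Set X) : Set X :=
  {p | ∃ w ∈ S, IsNearestPt γ w p}

/-- The horofunction embedding `z ↦ d(·, z) − d(x₀, z)` based at `x₀`. -/
def horoemb {X : Type*} [MetricSpace X] (x0 : X) (z : X) : X → ℝ :=
  fun x => dist x z - dist x0 z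

/-- The horofunction boundary of `X` (based at `x₀`), which for a proper geodesic
CAT(−1) space coincides with the Gromov boundary `∂X`:  the set of limits, in the
topology of pointwise convergence, of functions `d(·, zₙ) − d(x₀, zₙ)` with `zₙ → ∞`. -/
def horoBdry {X : Type*} [MetricSpace X] (x0 : X) : Set (X → ℝ) :=
  closure (Set.range (horoemb x0)) \ Set.range (horoemb x0)

/-- `(w, [x,y])` is `K`-aligned: the nearest-point projection of `w` to `[x,y]` is at
distance less than `K` from `x`. -/
def AlignedLeft {X : Type*} [MetricSpace X] (G : GeodesicStructure X) (w x y : X)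
    (K : ℝ) : Prop :=
  ∃ p, IsNearestPt (G.seg x y) w p ∧ dist p x < K

/-- `([x,y], z)` is `K`-aligned, i.e. `(z, [y,x])` is `K`-aligned. -/
def AlignedRight {X : Type*} [MetricSpace X] (G : GeodesicStructure X) (x y z : X)
    (K : ℝ) : Prop :=
  ∃ q, IsNearestPt (G.seg x y) z q ∧ dist q y < K

/-- `(w, [x,y], z)` is `K`-aligned. -/
def AlignedTriple {X : Type*} [MetricSpace X] (G : GeodesicStructure X) (w x y z : X)
    (K : ℝ) : Prop :=
  AlignedLeft G w x y K ∧ AlignedRight G x y z K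


/-! ## Products of CAT(−1) spaces, boundary action, transverse subgroups -/

/-- The natural map on 1-Lipschitz functions induced by an isometry `g`:
`f ↦ f ∘ g⁻¹ − f(g⁻¹ x₀)`, i.e. the renormalized action on horofunctions. -/
def horoMap {Y : Type*} [MetricSpace Y] (x0 : Y) (g : Y ≃ᵢ Y) (f : Y → ℝ) : Y → ℝ :=
  fun x => f (g.symm x) - f (g.symm x0)

theorem horoMap_horoemb {Y : Type*} [MetricSpace Y] (x0 : Y) (g : Y ≃ᵢ Y) (z : Y) :
    horoMap x0 g (horoemb x0 z) = horoemb x0 (g z) := by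
  funext x
  simp only [horoMap, horoemb]
  have h1 : dist (g.symm x) z = dist x (g z) := by
    conv_rhs => rw [← g.apply_symm_apply x]
    rw [g.dist_eq]
  have h2 : dist (g.symm x0) z = dist x0 (g z) := by
    conv_rhs => rw [← g.apply_symm_apply x0]
    rw [g.dist_eq]
  rw [h1, h2]
  ring

theorem horoMap_continuous {Y : Type*} [MetricSpace Y] (x0 : Y) (g : Y ≃ᵢ Y) :
    Continuous (horoMap x0 g) := by
  apply continuous_pi
  intro x
  exact (continuous_apply (g.symm x)).sub (continuous_apply (g.symm x0))

/-- Isometries preserve the horofunction boundary. -/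
theorem horoMap_mem_bdry {Y : Type*} [MetricSpace Y] (x0 : Y) (g : Y ≃ᵢ Y)
    {f : Y → ℝ} (hf : f ∈ horoBdry x0) : horoMap x0 g f ∈ horoBdry x0 := by
  obtain ⟨hf1, hf2⟩ := hf
  constructor
  · have h2 : horoMap x0 g '' closure (Set.range (horoemb x0)) ⊆
        closure (horoMap x0 g '' Set.range (horoemb x0)) :=
      image_closure_subset_closure_image (horoMap_continuous x0 g)
    have h3 : horoMap x0 g '' Set.range (horoemb x0) ⊆ Set.range (horoemb x0) := by
      rintro _ ⟨_, ⟨w, rfl⟩, rfl⟩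
      exact ⟨g w, (horoMap_horoemb x0 g w).symm⟩
    exact closure_mono h3 (h2 ⟨f, hf1, rfl⟩)
  · intro hmem
    obtain ⟨w, hw⟩ := hmem
    apply hf2
    have hfx0 : f x0 = 0 := by
      have hcl : IsClosed {u : Y → ℝ | u x0 = 0} :=
        isClosed_eq (continuous_apply x0) continuous_const
      have hsub : Set.range (horoemb x0) ⊆ {u : Y → ℝ | u x0 = 0} := by
        rintro _ ⟨v, rfl⟩
        simp [horoemb]
      exact closure_minimal hsub hcl hf1
    refine ⟨g.symm w, ?_⟩
    have hkey : horoMap x0 g.symm (horoemb x0 w) = horoemb x0 (g.symm w) :=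
      horoMap_horoemb x0 g.symm w
    rw [← hkey, hw]
    funext x
    simp only [horoMap, IsometryEquiv.symm_symm]
    rw [g.symm_apply_apply, g.symm_apply_apply, hfx0]
    ring

section Product

variable {r : ℕ} {X : Fin r → Type*} [∀ i, MetricSpace (X i)]

/-- The componentwise action of `Isom(Z) = ∏ᵢ Isom(Xᵢ)` on `Z = ∏ᵢ Xᵢ`. -/
def apZ (g : ∀ i, X i ≃ᵢ X i) (z : ∀ i, X i) : ∀ i, X i := fun i => (g i) (z i)

variable (z0 : ∀ i, X i)

/-- The boundary `∂Z = ∏ᵢ ∂Xᵢ` of the product, using the horofunction model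
(based at `z0`) of the Gromov boundary of each CAT(−1) factor. -/
abbrev BdryZ := ∀ i, {f : X i → ℝ // f ∈ horoBdry (z0 i)}

/-- The action of `Isom(Z)` on `∂Z`, componentwise. -/
def bact (g : ∀ i, X i ≃ᵢ X i) (ξ : BdryZ z0) : BdryZ z0 :=
  fun i => ⟨horoMap (z0 i) (g i) ↑(ξ i), horoMap_mem_bdry (z0 i) (g i) (ξ i).2⟩

/-- The limit set `Λ(Γ) ⊂ ∂Z` of a subgroup `Γ ≤ Isom(Z)`: the set of accumulation
points of a `Γ`-orbit in `Z` under componentwise convergence to the boundary. -/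
def limitSet (Γ : Subgroup (∀ i, X i ≃ᵢ X i)) : Set (BdryZ z0) :=
  {ξ | ∃ u : ℕ → Γ, ∀ i,
    Filter.Tendsto (fun n => horoemb (z0 i) (((u n : ∀ i, X i ≃ᵢ X i)) i (z0 i)))
      Filter.atTop (nhds ↑(ξ i))}

/-- A discrete subgroup `Γ ≤ Isom(Z)` is **transverse** if it acts properly on `Z`,
every infinite sequence in `Γ` diverges in each factor (divergence), and any two
distinct points of the limit set differ in every component (antipodality). -/
def IsTransverse (Γ : Subgroup (∀ i, X i ≃ᵢ X i)) : Prop :=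
  (∀ (z : ∀ i, X i) (c : ℝ),
      {g : Γ | ∀ i, dist ((g : ∀ i, X i ≃ᵢ X i) i (z i)) (z i) ≤ c}.Finite) ∧
  (∀ u : ℕ → Γ, Function.Injective u → ∀ (z : ∀ i, X i) (i : Fin r),
      Filter.Tendsto (fun n => dist (((u n : ∀ i, X i ≃ᵢ X i)) i (z i)) (z i))
        Filter.atTop Filter.atTop) ∧
  (∀ ξ ζ, ξ ∈ limitSet z0 Γ → ζ ∈ limitSet z0 Γ → ξ ≠ ζ → ∀ i, ξ i ≠ ζ i)

/-- `Γ` is non-elementary: its limit set has at least three points. -/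
def IsNonElementary (Γ : Subgroup (∀ i, X i ≃ᵢ X i)) : Prop :=
  ∃ ξ ζ η, ξ ∈ limitSet z0 Γ ∧ ζ ∈ limitSet z0 Γ ∧ η ∈ limitSet z0 Γ ∧
    ξ ≠ ζ ∧ ξ ≠ η ∧ ζ ≠ η

/-- The conical (radial) limit set `Λ_c(Γ) ⊂ ∂Z`: points approached by an orbit within
uniformly bounded distance of geodesic rays in every factor simultaneously;
equivalently (via shadows), `β_ξ(z₀, gₙ z₀) ≥ d(z₀, gₙ z₀) − K` in every factor. -/
def conicalLimitSet (Γ : Subgroup (∀ i, X i ≃ᵢ X i)) : Set (BdryZ z0) :=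
  {ξ | ξ ∈ limitSet z0 Γ ∧ ∃ K : ℝ, ∃ u : ℕ → Γ, Function.Injective u ∧ ∀ n i,
    dist (z0 i) (((u n : ∀ i, X i ≃ᵢ X i)) i (z0 i)) - K ≤
      (↑(ξ i) : X i → ℝ) (z0 i) - (↑(ξ i) : X i → ℝ) (((u n : ∀ i, X i ≃ᵢ X i)) i (z0 i))}

/-- `g` is a loxodromic isometry with translation length `τ > 0`: it translates some
geodesic line (its axis) by `τ`. -/
def IsLoxodromicWith {Y : Type*} [MetricSpace Y] (g : Y ≃ᵢ Y) (τ : ℝ) : Prop :=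
  0 < τ ∧ ∃ γ : ℝ → Y, IsGeodesicLine γ ∧ ∀ t, g (γ t) = γ (t + τ)

/-- A parabolic isometry of a CAT(−1) space: no fixed point in `X` and a unique fixed
point on the boundary `∂X`. -/
def IsParabolicIso {Y : Type*} [MetricSpace Y] (x0 : Y) (g : Y ≃ᵢ Y) : Prop :=
  (∀ x : Y, g x ≠ x) ∧ ∃! f : Y → ℝ, f ∈ horoBdry x0 ∧ horoMap x0 g f = f

/-- `g ∈ Isom(Z)` is loxodromic with translation length vector `τ ∈ ℝʳ` if each
component is loxodromic with translation length `τᵢ`. -/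
def IsLoxVector (g : ∀ i, X i ≃ᵢ X i) (τ : Fin r → ℝ) : Prop :=
  ∀ i, IsLoxodromicWith (g i) (τ i)

/-- The vector-valued length spectrum `Spec(Γ) ⊂ ℝʳ`. -/
def lengthSpectrum (Γ : Subgroup (∀ i, X i ≃ᵢ X i)) : Set (Fin r → ℝ) :=
  {τ | ∃ g ∈ Γ, IsLoxVector g τ}

/-- `Spec(Γ)` is non-arithmetic: it generates a dense additive subgroup of `ℝʳ`. -/
def HasNonArithmeticSpectrum (Γ : Subgroup (∀ i, X i ≃ᵢ X i)) : Prop :=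
  Dense ((AddSubgroup.closure (lengthSpectrum Γ) : AddSubgroup (Fin r → ℝ)) :
    Set (Fin r → ℝ))

/-- The horospherical foliation `H = ∂Z × ℝʳ`. -/
abbrev HorFol := BdryZ z0 × (Fin r → ℝ)

/-- The `Isom(Z)`-action on `H = ∂Z × ℝʳ`:
`g · (ξ, u) = (g ξ, u + β_ξ(g⁻¹ z₀, z₀))`, where `β` is the vector-valued Busemann
cocycle `β_ξ(z, z')ᵢ = ξᵢ(zᵢ) − ξᵢ(z'ᵢ)`. -/
def HAct (g : ∀ i, X i ≃ᵢ X i) (p : HorFol z0) : HorFol z0 :=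
  (bact z0 g p.1,
    fun i => p.2 i +
      ((↑(p.1 i) : X i → ℝ) ((g i).symm (z0 i)) - (↑(p.1 i) : X i → ℝ) (z0 i)))

/-- Translation `T_a : (ξ, u) ↦ (ξ, u + a)` on `H`. -/
def Ttrans (a : Fin r → ℝ) (p : HorFol z0) : HorFol z0 := (p.1, p.2 + a)

instance horoBdryMeasurableSpace {Y : Type*} [MetricSpace Y] (x0 : Y) :
    MeasurableSpace {f : Y → ℝ // f ∈ horoBdry x0} := borel _

open MeasureTheory in
/-- `μ` is invariant under the `Γ`-action on `H`. -/
def InvariantUnder (Γ : Subgroup (∀ i, X i ≃ᵢ X i)) (μ : Measure (HorFol z0)) : Prop :=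
  ∀ g ∈ Γ, ∀ E : Set (HorFol z0), MeasurableSet E → μ (HAct z0 g ⁻¹' E) = μ E

open MeasureTheory in
/-- The `Γ`-action on `(H, μ)` is ergodic: every `Γ`-invariant Borel set is null or
conull. -/
def ErgodicUnder (Γ : Subgroup (∀ i, X i ≃ᵢ X i)) (μ : Measure (HorFol z0)) : Prop :=
  ∀ E : Set (HorFol z0), MeasurableSet E → (∀ g ∈ Γ, HAct z0 g ⁻¹' E = E) →
    μ E = 0 ∨ μ Eᶜ = 0

open MeasureTheory in
/-- `μ` is a Radon measure: a Borel measure finite on compact sets (on the second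
countable locally compact space `H` this is the usual notion). -/
def IsRadon {α : Type*} [TopologicalSpace α] [MeasurableSpace α] (μ : Measure α) : Prop :=
  ∀ Kc : Set α, IsCompact Kc → μ Kc ≠ ⊤

/-- The Poincaré series `P_{Γ,ψ}(s) = Σ_{g ∈ Γ} e^{−s ψ(κ(z₀, g z₀))}`, where
`κ(z,z') ∈ ℝʳ` is the vector of component distances. -/
def poincareSeries (Γ : Subgroup (∀ i, X i ≃ᵢ X i)) (ψ : (Fin r → ℝ) →ₗ[ℝ] ℝ)
    (s : ℝ) : ℝ≥0∞ :=
  ∑' g : Γ, ENNReal.ofReal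
    (Real.exp (-(s * ψ (fun i => dist (z0 i) (((g : ∀ i, X i ≃ᵢ X i)) i (z0 i))))))

/-- The critical exponent `δ_ψ(Γ)`. -/
def critExponent (Γ : Subgroup (∀ i, X i ≃ᵢ X i)) (ψ : (Fin r → ℝ) →ₗ[ℝ] ℝ) : ℝ :=
  sInf {s : ℝ | 0 < s ∧ poincareSeries z0 Γ ψ s ≠ ⊤}

/-- `Γ` is of `ψ`-divergence type: `δ_ψ(Γ) < ∞` and the Poincaré series diverges at
`δ_ψ(Γ)`. -/
def IsDivergenceType (Γ : Subgroup (∀ i, X i ≃ᵢ X i)) (ψ : (Fin r → ℝ) →ₗ[ℝ] ℝ) : Prop :=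
  {s : ℝ | 0 < s ∧ poincareSeries z0 Γ ψ s ≠ ⊤}.Nonempty ∧
  poincareSeries z0 Γ ψ (critExponent z0 Γ ψ) = ⊤

open MeasureTheory in
/-- A `δ`-dimensional `ψ`-conformal density of `Γ`: a `Γ`-equivariant family
`{ν_z}_{z ∈ Z}` of Borel measures on `Λ(Γ) ⊂ ∂Z` with
`dν_z/dν_w(ξ) = e^{−δ·ψ(β_ξ(z,w))}` and `ν_{z₀}(∂Z) = 1`. -/
structure ConformalDensity (Γ : Subgroup (∀ i, X i ≃ᵢ X i)) (δ : ℝ)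
    (ψ : (Fin r → ℝ) →ₗ[ℝ] ℝ) where
  nu : (∀ i, X i) → Measure (BdryZ z0)
  equivariant : ∀ g ∈ Γ, ∀ z, (nu z).map (bact z0 g) = nu (apZ g z)
  conformal : ∀ z w, nu z = (nu w).withDensity fun ξ =>
    ENNReal.ofReal (Real.exp (-(δ * ψ (fun i =>
      (↑(ξ i) : X i → ℝ) (z i) - (↑(ξ i) : X i → ℝ) (w i)))))
  normalized : nu z0 Set.univ = 1
  onLimitSet : nu z0 (limitSet z0 Γ)ᶜ = 0

open MeasureTheory in
/-- The measure `dμ(ξ, u) = e^{δ·ψ(u)} dν(ξ) du` on `H = ∂Z × ℝʳ`. -/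
def muH (ν : Measure (BdryZ z0)) (δ : ℝ) (ψ : (Fin r → ℝ) →ₗ[ℝ] ℝ) :
    Measure (HorFol z0) :=
  (ν.prod volume).withDensity fun p => ENNReal.ofReal (Real.exp (δ * ψ p.2))

end Product

/-! ## Auxiliary lemmas for the proof of closedness of orbits -/

section Aux
set_option maxHeartbeats 1000000

/-- Elementary upper-bound function used to estimate `arcosh (1 + u)`. -/
def bnd (u : ℝ) : ℝ := Real.sqrt (2*u) + 2*u

lemma bnd_nonneg {u : ℝ} (hu : 0 ≤ u) : 0 ≤ bnd u := by
  unfold bnd; positivity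

lemma bnd_mono {u v : ℝ} (huv : u ≤ v) : bnd u ≤ bnd v := by
  unfold bnd
  have h1 : Real.sqrt (2*u) ≤ Real.sqrt (2*v) := Real.sqrt_le_sqrt (by linarith)
  linarith

lemma arcosh_le_bnd {u U : ℝ} (hu : 0 ≤ u) (huU : u ≤ U) : _root_.arcosh (1 + u) ≤ bnd U := by
  have hsq : Real.sqrt (2*u) ^ 2 = 2*u := Real.sq_sqrt (by linarith)
  have hsn : 0 ≤ Real.sqrt (2*u) := Real.sqrt_nonneg _
  have h2 : Real.sqrt ((1+u)^2 - 1) ≤ u + Real.sqrt (2*u) := by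
    have h1 : (1+u)^2 - 1 = u^2 + 2*u := by ring
    rw [h1]
    have h3 : u^2 + 2*u ≤ (u + Real.sqrt (2*u))^2 := by nlinarith
    calc Real.sqrt (u^2+2*u) ≤ Real.sqrt ((u + Real.sqrt (2*u))^2) := Real.sqrt_le_sqrt h3
      _ = u + Real.sqrt (2*u) := Real.sqrt_sq (by positivity)
  have h3 : _root_.arcosh (1+u) ≤ Real.log (1 + (2*u + Real.sqrt (2*u))) := by
    unfold _root_.arcosh
    apply Real.log_le_log (by positivity)
    nlinarith [Real.sqrt_nonneg ((1+u)^2 - 1)]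
  refine h3.trans ?_
  have h4 : Real.log (1 + (2*u + Real.sqrt (2*u))) ≤ 2*u + Real.sqrt (2*u) := by
    have h5 := Real.log_le_sub_one_of_pos (x := 1 + (2*u + Real.sqrt (2*u))) (by positivity)
    linarith
  have h5 : Real.sqrt (2*u) ≤ Real.sqrt (2*U) := Real.sqrt_le_sqrt (by linarith)
  unfold bnd; linarith

variable {Y : Type*} [MetricSpace Y]

/-- Reversal: the chosen geodesic from `x` to `y` agrees with the reversed chosen geodesic
from `y` to `x`, as a consequence of the CAT(−1) comparison. -/
lemma GeodesicStructure.rev (G : GeodesicStructure Y) (hG : G.IsCATNegOne) (x y : Y) {s : ℝ}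
    (h0 : 0 ≤ s) (h1 : s ≤ dist x y) :
    G.geo x y s = G.geo y x (dist x y - s) := by
  rcases h0.eq_or_lt with h | hs0
  · rw [← h, G.geo_zero, sub_zero, dist_comm, G.geo_end]
  rcases h1.eq_or_lt with h | hsd
  · rw [h, G.geo_end, sub_self, G.geo_zero]
  have hd0 : 0 < dist x y := lt_of_le_of_lt h0 hsd
  have hyx : dist y x = dist x y := dist_comm y x
  set u := dist x y - s with hu
  have hu0 : 0 ≤ u := by simp only [hu]; linarith
  have huI : u ∈ Set.Icc (0:ℝ) (dist y x) := ⟨hu0, by rw [hyx]; simp only [hu]; linarith⟩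
  set m := G.geo y x u with hm
  have hxm : dist x m = s := by
    have h2 := G.geo_isom y x (dist y x) ⟨dist_nonneg, le_refl _⟩ u huI
    rw [G.geo_end] at h2
    rw [hm, h2, hyx]
    rw [abs_of_nonneg (by simp only [hu]; linarith)]
    simp only [hu]; ring
  have hym : dist y m = u := by
    have h2 := G.geo_isom y x 0 ⟨le_refl _, dist_nonneg⟩ u huI
    rw [G.geo_zero] at h2
    rw [hm, h2, abs_of_nonpos (by linarith), neg_sub, sub_zero]
  have hax := hG x y m s ⟨h0, h1⟩ s (by rw [hxm]; exact ⟨h0, le_refl s⟩)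
  have hend : G.geo x m s = m := by
    conv_lhs => rw [← hxm]
    exact G.geo_end x m
  rw [hend, hxm, hym] at hax
  have hcmp : cmpDist (dist x y) s u s s = 0 := by
    unfold cmpDist cmpCos
    have hsd2 : 0 < Real.sinh (dist x y) * Real.sinh s :=
      mul_pos (Real.sinh_pos_iff.2 hd0) (Real.sinh_pos_iff.2 hs0)
    have hnum : Real.cosh (dist x y) * Real.cosh s - Real.cosh u
        = Real.sinh (dist x y) * Real.sinh s := by
      simp only [hu]
      rw [Real.cosh_sub]; ring
    rw [hnum, div_self hsd2.ne']
    have : Real.cosh s * Real.cosh s - Real.sinh s * Real.sinh s * 1 = 1 := by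
      have h6 := Real.cosh_sq_sub_sinh_sq s
      nlinarith
    rw [this]
    unfold _root_.arcosh
    norm_num
  rw [hcmp] at hax
  exact dist_le_zero.mp hax

/-- Fellow-travelling kernel: two geodesics issuing from a common vertex stay
exponentially close, in terms of the Gromov product of their endpoints. -/
lemma GeodesicStructure.ker (G : GeodesicStructure Y) (hG : G.IsCATNegOne) (v a b : Y) {s : ℝ}
    (hs0 : 0 ≤ s) (hsa : s ≤ dist v a) (hsb : s ≤ dist v b)
    (ha : 1 ≤ dist v a) (hb : 1 ≤ dist v b) :
    dist (G.geo v a s) (G.geo v b s) ≤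
      bnd (2 * Real.exp (2*s - (dist v a + dist v b - dist a b))) := by
  set A := dist v a with hA
  set B := dist v b with hB
  set c := dist a b with hc
  have hc0 : 0 ≤ c := dist_nonneg
  have hax := hG v a b s ⟨hs0, hsa⟩ s ⟨hs0, hsb⟩
  refine hax.trans ?_
  have hsA : 0 < Real.sinh A := Real.sinh_pos_iff.2 (by linarith)
  have hsB : 0 < Real.sinh B := Real.sinh_pos_iff.2 (by linarith)
  have hD : 0 < Real.sinh A * Real.sinh B := mul_pos hsA hsB
  have hcc : Real.cosh (A - B) ≤ Real.cosh c := by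
    rw [Real.cosh_le_cosh]
    rw [abs_of_nonneg hc0]
    calc |A - B| = |dist a v - dist b v| := by rw [hA, hB, dist_comm v a, dist_comm v b]
      _ ≤ dist a b := abs_dist_sub_le a b v
  set u := Real.sinh s ^ 2 * (Real.cosh c - Real.cosh (A - B)) / (Real.sinh A * Real.sinh B)
    with hu_def
  have hEeq : Real.cosh s * Real.cosh s - Real.sinh s * Real.sinh s * cmpCos A B c = 1 + u := by
    rw [hu_def]
    unfold cmpCos
    rw [Real.cosh_sub]
    field_simp
    nlinarith [Real.cosh_sq_sub_sinh_sq s]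
  have hu0 : 0 ≤ u := by
    rw [hu_def]
    apply div_nonneg _ hD.le
    apply mul_nonneg (sq_nonneg _)
    linarith
  have huU : u ≤ 2 * Real.exp (2*s - (A + B - c)) := by
    have hsinh_s : Real.sinh s ^ 2 ≤ Real.exp s ^ 2 / 4 := by
      have h1 : Real.sinh s ≤ Real.exp s / 2 := by
        rw [Real.sinh_eq]
        have := Real.exp_pos (-s)
        linarith
      have h2 : 0 ≤ Real.sinh s := Real.sinh_nonneg_iff.2 hs0
      nlinarith
    have hcosh_c : Real.cosh c - Real.cosh (A - B) ≤ Real.exp c := by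
      have h1 : Real.cosh c ≤ Real.exp c := by
        rw [Real.cosh_eq]
        have h2 : Real.exp (-c) ≤ Real.exp c := Real.exp_le_exp.2 (by linarith)
        linarith
      have h3 := Real.one_le_cosh (A - B)
      linarith
    have he2 : Real.exp (2:ℝ) ≥ 4 := by
      have h1 : (2:ℝ) ≤ Real.exp 1 := by
        have := Real.add_one_le_exp (1:ℝ); linarith
      calc (4:ℝ) = 2 * 2 := by norm_num
        _ ≤ Real.exp 1 * Real.exp 1 := by nlinarith [Real.exp_pos (1:ℝ)]
        _ = Real.exp 2 := by rw [← Real.exp_add]; norm_num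
    have hsinh_lb : ∀ t : ℝ, 1 ≤ t → Real.exp t * (3/8) ≤ Real.sinh t := by
      intro t ht
      rw [Real.sinh_eq]
      have h1 : Real.exp (-t) ≤ Real.exp t * Real.exp (-2 : ℝ) := by
        rw [← Real.exp_add]
        exact Real.exp_le_exp.2 (by linarith)
      have h2 : Real.exp (-2:ℝ) ≤ 1/4 := by
        rw [Real.exp_neg]
        rw [inv_le_comm₀ (Real.exp_pos 2) (by norm_num)]
        linarith
      have h3 : Real.exp t * Real.exp (-2:ℝ) ≤ Real.exp t * (1/4) := by
        apply mul_le_mul_of_nonneg_left h2 (Real.exp_pos t).le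
      have := Real.exp_pos t
      nlinarith
    have hlbA := hsinh_lb A ha
    have hlbB := hsinh_lb B hb
    have hexp_id : Real.exp (2*s - (A + B - c)) * (Real.exp A * Real.exp B)
        = Real.exp s ^ 2 * Real.exp c := by
      rw [sq, ← Real.exp_add s s, ← Real.exp_add A B, ← Real.exp_add, ← Real.exp_add]
      congr 1; ring
    rw [hu_def, div_le_iff₀ hD]
    have hES := Real.exp_pos s
    have hEC := Real.exp_pos c
    have hEX := Real.exp_pos (2*s - (A + B - c))
    have k1 : Real.sinh s ^ 2 * (Real.cosh c - Real.cosh (A - B))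
        ≤ Real.exp s ^ 2 / 4 * Real.exp c :=
      mul_le_mul hsinh_s hcosh_c (by linarith) (by positivity)
    have h9 : 2 * Real.exp (2*s - (A + B - c)) * (Real.exp A * (3/8) * (Real.exp B * (3/8)))
        = (9/32) * (Real.exp s ^ 2 * Real.exp c) := by
      rw [← hexp_id]; ring
    have k2 : Real.exp s ^ 2 / 4 * Real.exp c
        ≤ 2 * Real.exp (2*s - (A + B - c)) * (Real.exp A * (3/8) * (Real.exp B * (3/8))) := by
      rw [h9]
      have hpos : 0 < Real.exp s ^ 2 * Real.exp c := mul_pos (pow_pos hES 2) hEC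
      ring_nf
      nlinarith [hpos]
    have k3 : 2 * Real.exp (2*s - (A + B - c)) * (Real.exp A * (3/8) * (Real.exp B * (3/8)))
        ≤ 2 * Real.exp (2*s - (A + B - c)) * (Real.sinh A * Real.sinh B) := by
      apply mul_le_mul_of_nonneg_left
        (mul_le_mul hlbA hlbB (by positivity) hsA.le) (by positivity)
    linarith
  calc cmpDist A B c s s = _root_.arcosh (1 + u) := by unfold cmpDist; rw [hEeq]
    _ ≤ bnd (2 * Real.exp (2*s - (A + B - c))) := arcosh_le_bnd hu0 huU

end Aux

section Aux2
set_option maxHeartbeats 1000000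

variable {Y : Type*} [MetricSpace Y]

/-- Half-estimate: the horofunction of `y` at `x` is computed, up to an exponentially
small error, by the point at parameter `s` on the geodesic `[x₀, y]`. -/
lemma halfest (G : GeodesicStructure Y) (hG : G.IsCATNegOne) (x0 x y : Y) {s : ℝ}
    (hs1 : dist x0 x ≤ s) (hs2 : s ≤ dist x0 y)
    (hsep : dist x0 x + 1 ≤ dist x0 y) :
    |horoemb x0 y x - (dist x (G.geo x0 y s) - s)|
      ≤ bnd (2 * Real.exp (2 * dist x0 x - 2 * s)) := by
  have hdx0 : (0:ℝ) ≤ dist x0 x := dist_nonneg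
  have hs0 : 0 ≤ s := hdx0.trans hs1
  have ht1 : dist x0 y ≤ dist x0 x + dist x y := dist_triangle x0 x y
  have ht2 : dist x y ≤ dist x x0 + dist x0 y := dist_triangle x x0 y
  have hxx0 : dist x x0 = dist x0 x := dist_comm x x0
  set u := dist x0 y - s with hu
  have hu0 : 0 ≤ u := by simp only [hu]; linarith
  have hudxy : u ≤ dist x y := by simp only [hu]; linarith
  have hyx0 : dist y x0 = dist x0 y := dist_comm y x0
  have hyx : dist y x = dist x y := dist_comm y x
  -- kernel at vertex y
  have hker := G.ker hG y x0 x (s := u) hu0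
    (by rw [hyx0]; simp only [hu]; linarith)
    (by rw [hyx]; exact hudxy)
    (by rw [hyx0]; linarith)
    (by rw [hyx]; linarith)
  have hrev : G.geo x0 y s = G.geo y x0 u := by
    rw [G.rev hG x0 y hs0 hs2]
  have hpx : dist x (G.geo y x u) = dist x y - u := by
    have h1 := G.geo_isom y x (dist y x) ⟨dist_nonneg, le_refl _⟩ u
      ⟨hu0, by rw [hyx]; exact hudxy⟩
    rw [G.geo_end] at h1
    rw [h1, hyx, abs_of_nonneg (by linarith)]
  have hmy : dist (G.geo x0 y s) y = dist x0 y - s := by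
    have h1 := G.geo_isom x0 y s ⟨hs0, hs2⟩ (dist x0 y) ⟨dist_nonneg, le_refl _⟩
    rw [G.geo_end] at h1
    rw [h1, abs_of_nonpos (by linarith), neg_sub]
  have hE0 : 0 ≤ bnd (2 * Real.exp (2 * dist x0 x - 2 * s)) := bnd_nonneg (by positivity)
  have hmp : dist (G.geo x0 y s) (G.geo y x u) ≤ bnd (2 * Real.exp (2 * dist x0 x - 2 * s)) := by
    rw [hrev]
    refine hker.trans (bnd_mono ?_)
    have h2 : 2*u - (dist y x0 + dist y x - dist x0 x) ≤ 2 * dist x0 x - 2 * s := by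
      rw [hyx0, hyx]; simp only [hu]; linarith
    exact mul_le_mul_of_nonneg_left (Real.exp_le_exp.2 h2) (by norm_num)
  have hub : horoemb x0 y x ≤ dist x (G.geo x0 y s) - s := by
    simp only [horoemb]
    have h3 := dist_triangle x (G.geo x0 y s) y
    rw [hmy] at h3
    linarith
  have hlb : dist x (G.geo x0 y s) - s
      ≤ horoemb x0 y x + bnd (2 * Real.exp (2 * dist x0 x - 2 * s)) := by
    simp only [horoemb]
    have h4 := dist_triangle x (G.geo y x u) (G.geo x0 y s)
    rw [hpx, dist_comm (G.geo y x u) (G.geo x0 y s)] at h4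
    simp only [hu] at h4 ⊢
    linarith
  rw [abs_le]
  constructor <;> linarith

/-- Fundamental estimate: values at `x` of horofunctions of two points whose Gromov
product is large are close. -/
lemma fundest (G : GeodesicStructure Y) (hG : G.IsCATNegOne) (x0 x y z : Y) {L : ℝ}
    (hL : 1 ≤ L)
    (hy : dist x0 x + L ≤ dist x0 y) (hz : dist x0 x + L ≤ dist x0 z)
    (hP : dist x0 x + 2*L ≤ (dist x0 y + dist x0 z - dist y z) / 2) :
    |horoemb x0 y x - horoemb x0 z x| ≤ 3 * bnd (2 * Real.exp (-(2*L))) := by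
  have hdx0 : (0:ℝ) ≤ dist x0 x := dist_nonneg
  set s := dist x0 x + L with hs
  have hexp : 2 * dist x0 x - 2 * s = -(2*L) := by rw [hs]; ring
  have h1 := halfest G hG x0 x y (s := s) (by rw [hs]; linarith) (by linarith) (by linarith)
  have h2 := halfest G hG x0 x z (s := s) (by rw [hs]; linarith) (by linarith) (by linarith)
  rw [hexp] at h1 h2
  have h3 := G.ker hG x0 y z (s := s) (by rw [hs]; linarith) (by linarith) (by linarith)
    (by linarith) (by linarith)
  have h3' : dist (G.geo x0 y s) (G.geo x0 z s) ≤ bnd (2 * Real.exp (-(2*L))) := by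
    refine h3.trans (bnd_mono ?_)
    refine mul_le_mul_of_nonneg_left (Real.exp_le_exp.2 ?_) (by norm_num)
    rw [hs]; linarith
  have h4 : |(dist x (G.geo x0 y s) - s) - (dist x (G.geo x0 z s) - s)|
      ≤ bnd (2 * Real.exp (-(2*L))) := by
    have h5 : |dist x (G.geo x0 y s) - dist x (G.geo x0 z s)|
        ≤ dist (G.geo x0 y s) (G.geo x0 z s) := by
      rw [dist_comm x (G.geo x0 y s), dist_comm x (G.geo x0 z s)]
      exact abs_dist_sub_le _ _ x
    have h6 : (dist x (G.geo x0 y s) - s) - (dist x (G.geo x0 z s) - s)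
        = dist x (G.geo x0 y s) - dist x (G.geo x0 z s) := by ring
    rw [h6]
    exact h5.trans h3'
  calc |horoemb x0 y x - horoemb x0 z x|
      ≤ |horoemb x0 y x - (dist x (G.geo x0 y s) - s)|
        + |(dist x (G.geo x0 y s) - s) - horoemb x0 z x| := abs_sub_le _ _ _
    _ ≤ |horoemb x0 y x - (dist x (G.geo x0 y s) - s)|
        + (|(dist x (G.geo x0 y s) - s) - (dist x (G.geo x0 z s) - s)|
          + |(dist x (G.geo x0 z s) - s) - horoemb x0 z x|) := by
        have := abs_sub_le (dist x (G.geo x0 y s) - s) (dist x (G.geo x0 z s) - s)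
          (horoemb x0 z x)
        linarith
    _ ≤ 3 * bnd (2 * Real.exp (-(2*L))) := by
        rw [abs_sub_comm (dist x (G.geo x0 z s) - s) (horoemb x0 z x)] at *
        linarith [h1, h2, h4]

end Aux2

section Aux3
set_option maxHeartbeats 1000000

variable {Y : Type*} [MetricSpace Y]

lemma closure_horoemb_basept {x0 : Y} {f : Y → ℝ}
    (hf : f ∈ closure (Set.range (horoemb x0))) : f x0 = 0 := by
  have hcl : IsClosed {u : Y → ℝ | u x0 = 0} :=
    isClosed_eq (continuous_apply x0) continuous_const
  have hsub : Set.range (horoemb x0) ⊆ {u : Y → ℝ | u x0 = 0} := by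
    rintro _ ⟨v, rfl⟩
    simp [horoemb]
  exact closure_minimal hsub hcl hf

lemma closure_horoemb_lip {x0 : Y} {f : Y → ℝ}
    (hf : f ∈ closure (Set.range (horoemb x0))) (a b : Y) : f a - f b ≤ dist a b := by
  have hcl : IsClosed {u : Y → ℝ | u a - u b ≤ dist a b} :=
    isClosed_le ((continuous_apply a).sub (continuous_apply b)) continuous_const
  have hsub : Set.range (horoemb x0) ⊆ {u : Y → ℝ | u a - u b ≤ dist a b} := by
    rintro _ ⟨v, rfl⟩
    simp only [horoemb, Set.mem_setOf_eq]
    have h1 := abs_dist_sub_le a b v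
    have h2 := le_abs_self (dist a v - dist b v)
    linarith
  exact closure_minimal hsub hcl hf

lemma continuous_horoemb (x0 : Y) : Continuous (horoemb x0 : Y → Y → ℝ) := by
  apply continuous_pi
  intro x
  exact (Continuous.dist continuous_const continuous_id).sub
    (Continuous.dist continuous_const continuous_id)

/-- Every horofunction is unbounded below. -/
lemma horoBdry_exists_le [ProperSpace Y] (G : GeodesicStructure Y) (x0 : Y) {f : Y → ℝ}
    (hf : f ∈ horoBdry x0) (T : ℝ) : ∃ x : Y, f x ≤ -T := by
  obtain ⟨hcl, hnr⟩ := hf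
  set T' := max T 0 with hT'
  have hT0 : 0 ≤ T' := le_max_right _ _
  set F := Filter.comap (horoemb x0) (nhds f) with hF
  have hFne : F.NeBot := by
    rw [hF, Filter.comap_neBot_iff]
    intro t ht
    obtain ⟨g, hg1, w, rfl⟩ := mem_closure_iff_nhds.mp hcl t ht
    exact ⟨w, hg1⟩
  set U := Ultrafilter.of F with hU
  have hUF : (U : Filter Y) ≤ F := Ultrafilter.of_le F
  have htend : Filter.Tendsto (horoemb x0) (U : Filter Y) (nhds f) :=
    le_trans (Filter.map_mono hUF) Filter.map_comap_le
  by_cases hb : ∃ R, Metric.closedBall x0 R ∈ U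
  · exfalso
    obtain ⟨R, hR⟩ := hb
    obtain ⟨w, -, hle⟩ := (isCompact_closedBall x0 R).ultrafilter_le_nhds U
      (le_principal_iff.2 hR)
    have hidt : Filter.Tendsto (fun y : Y => y) (U : Filter Y) (nhds w) := hle
    have h2 : Filter.Tendsto (horoemb x0) (U : Filter Y) (nhds (horoemb x0 w)) :=
      (((continuous_horoemb x0).tendsto w)).comp hidt
    exact hnr ⟨w, (tendsto_nhds_unique htend h2).symm⟩
  · push_neg at hb
    have hfar : ∀ R : ℝ, {w : Y | R ≤ dist x0 w} ∈ U := by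
      intro R
      have h1 : (Metric.closedBall x0 R)ᶜ ∈ U := Ultrafilter.compl_mem_iff_notMem.2 (hb R)
      refine Filter.mem_of_superset h1 ?_
      intro w hw
      simp only [Metric.mem_closedBall, Set.mem_compl_iff, not_le] at hw
      simp only [Set.mem_setOf_eq]
      rw [dist_comm]
      exact hw.le
    have hev : ∀ᶠ w in (U : Filter Y), T' ≤ dist x0 w := hfar T'
    have hγmem : Metric.closedBall x0 T' ∈ Ultrafilter.map (fun w => G.geo x0 w T') U := by
      rw [Ultrafilter.mem_map]
      refine Filter.mem_of_superset hev ?_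
      intro w hw
      have h1 := G.geo_isom x0 w T' ⟨hT0, hw⟩ 0 ⟨le_refl _, dist_nonneg⟩
      rw [G.geo_zero] at h1
      simp only [Set.mem_preimage, Metric.mem_closedBall]
      rw [h1, sub_zero, abs_of_nonneg hT0]
    obtain ⟨xT, -, hleT⟩ := (isCompact_closedBall x0 T').ultrafilter_le_nhds
      (Ultrafilter.map (fun w => G.geo x0 w T') U) (le_principal_iff.2 hγmem)
    have hγtend : Filter.Tendsto (fun w => G.geo x0 w T') (U : Filter Y) (nhds xT) := hleT
    have hdist0 : Filter.Tendsto (fun w => dist xT (G.geo x0 w T')) (U : Filter Y) (nhds 0) := by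
      have h2 := Filter.Tendsto.dist (tendsto_const_nhds (x := xT) (f := (U : Filter Y))) hγtend
      simpa using h2
    have hev2 : ∀ᶠ w in (U : Filter Y), horoemb x0 w (G.geo x0 w T') = -T' := by
      filter_upwards [hev] with w hw
      have h1 := G.geo_isom x0 w T' ⟨hT0, hw⟩ (dist x0 w) ⟨dist_nonneg, le_refl _⟩
      rw [G.geo_end] at h1
      simp only [horoemb]
      rw [h1, abs_of_nonpos (by linarith)]
      ring
    have hev3 : Filter.Tendsto (fun w => horoemb x0 w xT) (U : Filter Y) (nhds (f xT)) :=
      ((continuous_apply xT).tendsto f).comp htend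
    have hdiff : Filter.Tendsto (fun w => horoemb x0 w xT - horoemb x0 w (G.geo x0 w T'))
        (U : Filter Y) (nhds 0) := by
      apply squeeze_zero_norm _ hdist0
      intro w
      simp only [horoemb, Real.norm_eq_abs]
      have h3 : dist xT w - dist x0 w - (dist (G.geo x0 w T') w - dist x0 w)
          = dist xT w - dist (G.geo x0 w T') w := by ring
      rw [h3]
      exact abs_dist_sub_le xT (G.geo x0 w T') w
    have hsum : Filter.Tendsto (fun w => horoemb x0 w xT) (U : Filter Y) (nhds (-T')) := by
      have h4 : Filter.Tendsto (fun w => horoemb x0 w (G.geo x0 w T')) (U : Filter Y)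
          (nhds (-T')) :=
        Filter.Tendsto.congr' (by filter_upwards [hev2] with w hw; exact hw.symm)
          tendsto_const_nhds
      have h5 := hdiff.add h4
      simp only [sub_add_cancel, zero_add] at h5
      exact h5
    have hfT : f xT = -T' := tendsto_nhds_unique hev3 hsum
    refine ⟨xT, ?_⟩
    rw [hfT, hT']
    have := le_max_left T 0
    linarith

end Aux3

section Aux4
set_option maxHeartbeats 1000000

variable {Y : Type*} [MetricSpace Y]

/-- Key lemma: if a sequence goes to infinity while staying in a horoball of the
horofunction `f` (i.e. `f` is bounded above along it), then its horofunctions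
converge to `f`. -/
lemma horoemb_tendsto_of_le [ProperSpace Y] (G : GeodesicStructure Y)
    (hG : G.IsCATNegOne) (x0 : Y) {f : Y → ℝ} (hf : f ∈ horoBdry x0)
    (z : ℕ → Y) (hdiv : Filter.Tendsto (fun n => dist x0 (z n)) Filter.atTop Filter.atTop)
    (M : ℝ) (hM : ∀ n, f (z n) ≤ M) :
    Filter.Tendsto (fun n => horoemb x0 (z n)) Filter.atTop (nhds f) := by
  rw [tendsto_pi_nhds]
  intro x
  rw [Metric.tendsto_atTop]
  intro ε hε
  -- choose L
  obtain ⟨L, hL1, hLe⟩ : ∃ L : ℝ, 1 ≤ L ∧ 3 * bnd (2 * Real.exp (-(2*L))) < ε/2 := by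
    have e1 : Filter.Tendsto (fun L : ℝ => -(2*L)) Filter.atTop Filter.atBot :=
      Filter.tendsto_neg_atTop_atBot.comp
        (Filter.Tendsto.const_mul_atTop (by norm_num : (0:ℝ) < 2) Filter.tendsto_id)
    have e2 : Filter.Tendsto (fun L : ℝ => Real.exp (-(2*L))) Filter.atTop (nhds 0) :=
      Real.tendsto_exp_atBot.comp e1
    have e3 : Filter.Tendsto (fun L : ℝ => 2 * Real.exp (-(2*L))) Filter.atTop (nhds 0) := by
      have := e2.const_mul (2:ℝ)
      simpa using this
    have hbndc : Continuous bnd := by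
      unfold bnd
      exact (Real.continuous_sqrt.comp (continuous_const.mul continuous_id)).add
        (continuous_const.mul continuous_id)
    have e4 : Filter.Tendsto (fun L : ℝ => bnd (2 * Real.exp (-(2*L)))) Filter.atTop
        (nhds 0) := by
      have e6 := (hbndc.tendsto 0).comp e3
      have hb0 : bnd 0 = 0 := by unfold bnd; simp
      rw [hb0] at e6
      exact e6
    have e7 : Filter.Tendsto (fun L : ℝ => 3 * bnd (2 * Real.exp (-(2*L)))) Filter.atTop
        (nhds 0) := by
      have := e4.const_mul (3:ℝ)
      simpa using this
    have e8 := (e7.eventually (gt_mem_nhds (half_pos hε))).and (Filter.eventually_ge_atTop 1)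
    obtain ⟨L, hLa, hLb⟩ := e8.exists
    exact ⟨L, hLb, hLa⟩
  set dx := dist x0 x with hdx
  obtain ⟨ys, hys⟩ := horoBdry_exists_le G x0 hf (dx + L + 1)
  have hclos := hf.1
  obtain ⟨N, hN⟩ := Filter.eventually_atTop.mp
    (hdiv.eventually_ge_atTop (max (dx + L) (2*(dx + 2*L) + M + 1)))
  refine ⟨N, fun n hn => ?_⟩
  have hdn := hN n hn
  have hdn1 : dx + L ≤ dist x0 (z n) := le_trans (le_max_left _ _) hdn
  have hdn2 : 2*(dx + 2*L) + M + 1 ≤ dist x0 (z n) := le_trans (le_max_right _ _) hdn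
  -- a good approximant w of f
  have hV : {g : Y → ℝ | dist (g x) (f x) < ε/2} ∩
      ({g : Y → ℝ | dist (g (z n)) (f (z n)) < 1} ∩ {g : Y → ℝ | dist (g ys) (f ys) < 1})
        ∈ nhds f := by
    refine Filter.inter_mem ?_ (Filter.inter_mem ?_ ?_)
    · exact ContinuousAt.preimage_mem_nhds (x := f) (continuous_apply x).continuousAt
        (Metric.ball_mem_nhds (f x) (half_pos hε))
    · exact ContinuousAt.preimage_mem_nhds (x := f) (continuous_apply (z n)).continuousAt
        (Metric.ball_mem_nhds (f (z n)) one_pos)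
    · exact ContinuousAt.preimage_mem_nhds (x := f) (continuous_apply ys).continuousAt
        (Metric.ball_mem_nhds (f ys) one_pos)
  obtain ⟨g, hgV, w, rfl⟩ := mem_closure_iff_nhds.mp hclos _ hV
  obtain ⟨hwx, hwz, hwy⟩ := hgV
  rw [Set.mem_setOf_eq, Real.dist_eq] at hwx hwz hwy
  -- w is far from x0
  have hw1 : dx + L ≤ dist x0 w := by
    have h1 : horoemb x0 w ys ≤ f ys + 1 := by
      have := abs_lt.mp hwy
      linarith [this.2]
    have h2 : -(dist x0 w) ≤ horoemb x0 w ys := by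
      simp only [horoemb]
      have := dist_nonneg (x := ys) (y := w)
      linarith
    linarith
  -- Gromov product of z n and w is large
  have hw2 : dist x0 x + 2*L ≤ (dist x0 (z n) + dist x0 w - dist (z n) w)/2 := by
    have h1 : horoemb x0 w (z n) ≤ M + 1 := by
      have := abs_lt.mp hwz
      linarith [hM n, this.2]
    simp only [horoemb] at h1
    rw [← hdx]
    linarith
  have hmain := fundest G hG x0 x (z n) w hL1 hdn1 hw1 hw2
  rw [Real.dist_eq]
  calc |horoemb x0 (z n) x - f x|
      ≤ |horoemb x0 (z n) x - horoemb x0 w x| + |horoemb x0 w x - f x| := abs_sub_le _ _ _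
    _ < ε/2 + ε/2 := by
        have := lt_of_le_of_lt hmain hLe
        linarith
    _ = ε := by ring

end Aux4

/-- **Closedness of orbits outside the limit set** (Proposition 4.8).
Let `Z = X₁ × ⋯ × X_r` be a product of proper geodesic CAT(−1) spaces and
`Γ ≤ Isom(Z)` a non-elementary transverse subgroup.  Then for every
`(ξ, u) ∈ H = ∂Z × ℝʳ` with `ξ ∉ Λ(Γ)`, the orbit `Γ·(ξ, u)` is closed in `H`. -/
theorem orbit_closed_outside_limit_set
    {r : ℕ} {X : Fin r → Type*} [∀ i, MetricSpace (X i)] [∀ i, ProperSpace (X i)]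
    (G : ∀ i, GeodesicStructure (X i)) (hX : ∀ i, (G i).IsCATNegOne)
    (z0 : ∀ i, X i) (Γ : Subgroup (∀ i, X i ≃ᵢ X i))
    (htr : IsTransverse z0 Γ) (hne : IsNonElementary z0 Γ)
    (ξ : HorFol z0) (hξ : ξ.1 ∉ limitSet z0 Γ) :
    IsClosed {p : HorFol z0 | ∃ g ∈ Γ, p = HAct z0 g ξ} := by
  classical
  rw [← closure_subset_iff_isClosed]
  intro p hp
  set T : ℕ → Set Γ := fun k =>
    {g : Γ | HAct z0 ↑g ξ ∈ Prod.snd ⁻¹' Metric.ball p.2 (1/((k:ℝ)+1))} with hT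
  by_cases hfin : ∃ k, (T k).Finite
  · obtain ⟨k, hk⟩ := hfin
    have hr : (0:ℝ) < 1/((k:ℝ)+1) := by positivity
    have hUo : IsOpen (Prod.snd ⁻¹' Metric.ball p.2 (1/((k:ℝ)+1)) : Set (HorFol z0)) :=
      Metric.isOpen_ball.preimage continuous_snd
    have hpU : p ∈ (Prod.snd ⁻¹' Metric.ball p.2 (1/((k:ℝ)+1)) : Set (HorFol z0)) := by
      simp only [Set.mem_preimage, Metric.mem_ball, dist_self]
      exact hr
    have h1 := IsOpen.inter_closure hUo (Set.mem_inter hpU hp)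
    have h2 : (Prod.snd ⁻¹' Metric.ball p.2 (1/((k:ℝ)+1)) : Set (HorFol z0)) ∩
        {q : HorFol z0 | ∃ g ∈ Γ, q = HAct z0 g ξ}
        ⊆ (fun g : Γ => HAct z0 ↑g ξ) '' (T k) := by
      rintro q ⟨hqU, g, hgΓ, rfl⟩
      refine ⟨⟨g, hgΓ⟩, ?_, rfl⟩
      simpa [hT] using hqU
    have h4 := closure_minimal h2 ((hk.image _).isClosed) h1
    obtain ⟨g, -, hq⟩ := h4
    exact ⟨↑g, g.2, hq.symm⟩
  · exfalso
    push_neg at hfin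
    have hTi : ∀ k, (T k).Infinite := hfin
    have step : ∀ (k : ℕ) (F : Finset Γ), ((T k) \ ↑F).Nonempty :=
      fun k F => ((hTi k).diff F.finite_toSet).nonempty
    choose pick hpick using step
    set A : ℕ → Finset Γ :=
      fun n => Nat.rec (motive := fun _ => Finset Γ) ∅ (fun k Ak => insert (pick k Ak) Ak) n
      with hA
    set u : ℕ → Γ := fun n => pick n (A n) with hu
    have hmem : ∀ n, u n ∈ T n := fun n => (hpick n (A n)).1
    have hnot : ∀ n, u n ∉ (A n : Set Γ) := fun n => (hpick n (A n)).2
    have hins : ∀ n, A (n+1) = insert (u n) (A n) := fun n => rfl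
    have hsub : ∀ m n, m ≤ n → A m ⊆ A n := by
      intro m n h
      induction n, h using Nat.le_induction with
      | base => exact subset_rfl
      | succ n hmn ih =>
          rw [hins n]
          exact ih.trans (Finset.subset_insert _ _)
    have hmemA : ∀ m n, m < n → u m ∈ A n := by
      intro m n h
      apply hsub (m+1) n h
      rw [hins m]
      exact Finset.mem_insert_self _ _
    have hinj : Function.Injective u := by
      intro a b hab
      by_contra hne2
      rcases Ne.lt_or_gt hne2 with h | h
      · have h5 := hmemA a b h
        rw [hab] at h5
        exact hnot b (Finset.mem_coe.mpr h5)
      · have h5 := hmemA b a h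
        rw [← hab] at h5
        exact hnot a (Finset.mem_coe.mpr h5)
    apply hξ
    have hval0 : ∀ i, (↑(ξ.1 i) : X i → ℝ) (z0 i) = 0 :=
      fun i => closure_horoemb_basept (ξ.1 i).2.1
    have hinj' : Function.Injective (fun n => (u n)⁻¹) :=
      fun a b hab => hinj (inv_injective hab)
    have hdiv := htr.2.1 (fun n => (u n)⁻¹) hinj' z0
    refine ⟨fun n => (u n)⁻¹, fun i => ?_⟩
    have hbound : ∀ n, (↑(ξ.1 i) : X i → ℝ) (((↑(u n) : ∀ j, X j ≃ᵢ X j) i).symm (z0 i))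
        ≤ p.2 i + 1 - ξ.2 i := by
      intro n
      have h1 := hmem n
      simp only [hT, Set.mem_setOf_eq, Set.mem_preimage, Metric.mem_ball] at h1
      have hr : (0:ℝ) < 1/((n:ℝ)+1) := by positivity
      have h2 := (dist_pi_lt_iff hr).1 h1 i
      rw [Real.dist_eq] at h2
      have h3 : (HAct z0 (↑(u n)) ξ).2 i
          = ξ.2 i + ((↑(ξ.1 i) : X i → ℝ) (((↑(u n) : ∀ j, X j ≃ᵢ X j) i).symm (z0 i))
            - (↑(ξ.1 i) : X i → ℝ) (z0 i)) := rfl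
      rw [h3, hval0 i] at h2
      have h4 : (1:ℝ)/((n:ℝ)+1) ≤ 1 := by
        rw [div_le_one (by positivity)]
        have : (0:ℝ) ≤ (n:ℝ) := Nat.cast_nonneg n
        linarith
      have h6 := abs_lt.mp h2
      linarith [h6.2]
    have hdivi : Filter.Tendsto
        (fun n => dist (z0 i) (((↑(u n) : ∀ j, X j ≃ᵢ X j) i).symm (z0 i)))
        Filter.atTop Filter.atTop := by
      have h5 := hdiv i
      refine Filter.Tendsto.congr ?_ h5
      intro n
      rw [dist_comm]
      congr 1
    have hK := horoemb_tendsto_of_le (G i) (hX i) (z0 i) (ξ.1 i).2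
      (fun n => ((↑(u n) : ∀ j, X j ≃ᵢ X j) i).symm (z0 i)) hdivi
      (p.2 i + 1 - ξ.2 i) hbound
    have heq : (fun n => horoemb (z0 i)
          ((↑((u n)⁻¹ : Γ) : ∀ j, X j ≃ᵢ X j) i (z0 i)))
        = fun n => horoemb (z0 i) (((↑(u n) : ∀ j, X j ≃ᵢ X j) i).symm (z0 i)) := by
      funext n
      congr 1
    rw [heq]
    exact hK

end
end

section
/- Let X be a proper geodesic CAT(−1) space, γ : ℝ → X a geodesic, x ∈ X, and t ∈ ℝ with γ(t) = π_γ(x). Then for every s ∈ ℝ, |d(x, γ(s)) − (d(x, γ(t)) + |t − s|)| < 1.3. -/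
/-!
Core definitions: proper geodesic CAT(−1) spaces, geodesic segments,
nearest-point projections, horofunction (= Gromov) boundary.
-/

noncomputable section

open Real Set Metric Filter Topology
open scoped ENNReal NNReal

/-- Auxiliary: `arcosh 1 = 0`. -/
lemma arcosh_one' : _root_.arcosh 1 = 0 := by
  unfold _root_.arcosh; norm_num

/-- Auxiliary: strict monotonicity bound for `arcosh`. -/
lemma arcosh_lt' (y a : ℝ) (ha : 0 < a) (h1 : 1 ≤ y) (h2 : y < Real.cosh a) :
    _root_.arcosh y < a := by
  unfold _root_.arcosh
  have hsa : 0 < Real.sinh a := Real.sinh_pos_iff.2 ha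
  have hlt : y ^ 2 - 1 < Real.sinh a ^ 2 := by
    have := Real.cosh_sq_sub_sinh_sq a
    nlinarith
  have hsq : Real.sqrt (y ^ 2 - 1) < Real.sinh a := by
    calc Real.sqrt (y ^ 2 - 1) < Real.sqrt (Real.sinh a ^ 2) :=
          Real.sqrt_lt_sqrt (by nlinarith) hlt
      _ = Real.sinh a := Real.sqrt_sq hsa.le
  have hpos : 0 < y + Real.sqrt (y ^ 2 - 1) := by
    have := Real.sqrt_nonneg (y ^ 2 - 1); linarith
  have : y + Real.sqrt (y ^ 2 - 1) < Real.exp a := by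
    have := Real.cosh_add_sinh a; linarith
  calc Real.log (y + Real.sqrt (y ^ 2 - 1)) < Real.log (Real.exp a) :=
        Real.log_lt_log hpos this
    _ = a := Real.log_exp a

/-- Auxiliary: `cosh x - 1 ≤ x * sinh x` for `x ≥ 0`. -/
lemma cosh_sub_one_le' (x : ℝ) (hx : 0 ≤ x) : Real.cosh x - 1 ≤ x * Real.sinh x := by
  rw [Real.cosh_eq, Real.sinh_eq]
  have h1 : Real.exp x * Real.exp (-x) = 1 := by
    rw [← Real.exp_add]; simp
  have h2 : 1 - x ≤ Real.exp (-x) := by linarith [Real.add_one_le_exp (-x)]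
  have h3 : 1 + x ≤ Real.exp x := by linarith [Real.add_one_le_exp x]
  have h4 : 0 < Real.exp x := Real.exp_pos x
  have h5 : Real.exp x * (1 - x) ≤ 1 + x := by
    nlinarith [mul_le_mul_of_nonneg_left h2 h4.le]
  have h6 : 0 ≤ Real.exp x - 1 := by linarith
  have h7 : 0 ≤ x * (Real.exp x + 1) - (Real.exp x - 1) := by nlinarith
  nlinarith [mul_nonneg h6 h7]

/-- Auxiliary: the key hyperbolic numeric estimate. -/
lemma cosh_step' (v : ℝ) (hv : (1.3 : ℝ) ≤ v) :
    Real.cosh (v - 1.3) < (Real.cosh v + 1) / 2 := by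
  have e1 : Real.exp v = Real.exp (v - 1.3) * Real.exp (1.3 : ℝ) := by
    rw [← Real.exp_add]; norm_num
  have e2 : Real.exp (-v) = Real.exp (-(v - 1.3)) * Real.exp (-(1.3 : ℝ)) := by
    rw [← Real.exp_add]; ring_nf
  have hA : 1 ≤ Real.exp (v - 1.3) := Real.one_le_exp (by linarith)
  have hB : Real.exp (-(v - 1.3)) ≤ 1 := by
    have := Real.exp_le_exp.2 (by linarith : -(v - 1.3) ≤ 0)
    simpa using this
  have hB0 : 0 < Real.exp (-(v - 1.3)) := Real.exp_pos _
  have hp : (2.3 : ℝ) ≤ Real.exp (1.3 : ℝ) := by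
    have := Real.add_one_le_exp (1.3 : ℝ); linarith
  have hq0 : 0 < Real.exp (-(1.3 : ℝ)) := Real.exp_pos _
  have hq1 : Real.exp (-(1.3 : ℝ)) ≤ 1 := by
    have := Real.exp_le_exp.2 (by norm_num : -(1.3 : ℝ) ≤ 0)
    simpa using this
  rw [Real.cosh_eq, Real.cosh_eq, e1, e2]
  nlinarith [mul_nonneg (sub_nonneg.2 hA) (by linarith : (0:ℝ) ≤ Real.exp (1.3:ℝ) - 2),
    mul_nonneg (sub_nonneg.2 hB) (by linarith : (0:ℝ) ≤ 2 - Real.exp (-(1.3:ℝ)))]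

set_option maxHeartbeats 1000000 in
/-- **Distance estimate along a geodesic** (Corollary 2.3).  Let `X` be a proper geodesic
CAT(−1) space, `γ : ℝ → X` a geodesic, `x ∈ X` and `t ∈ ℝ` with `γ(t) = π_γ(x)`.  Then
for every `s ∈ ℝ`, `|d(x, γ(s)) − (d(x, γ(t)) + |t − s|)| < 1.3`. -/
theorem dist_along_geodesic_approx
    {X : Type*} [MetricSpace X] [ProperSpace X]
    (G : GeodesicStructure X) (hX : G.IsCATNegOne)
    (γ : ℝ → X) (hγ : IsGeodesicLine γ)
    (x : X) (t : ℝ) (ht : IsNearestPt (Set.range γ) x (γ t)) (s : ℝ) :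
    |dist x (γ s) - (dist x (γ t) + |t - s|)| < 1.3 := by
  rcases eq_or_ne t s with rfl | hts
  · simp
    norm_num
  set a := dist x (γ t) with ha_def
  set b := |t - s| with hb_def
  set c := dist x (γ s) with hc_def
  have hb : 0 < b := abs_pos.2 (sub_ne_zero.2 hts)
  have hab : dist (γ t) (γ s) = b := by rw [hγ, hb_def]
  have htri : c ≤ a + b := by
    have h := dist_triangle x (γ t) (γ s)
    rw [hab] at h; exact h
  have ha0 : (0:ℝ) ≤ a := dist_nonneg
  have hc0 : (0:ℝ) ≤ c := dist_nonneg
  have key : Real.cosh a * Real.cosh b ≤ Real.cosh c := by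
    rcases ha0.eq_or_lt with haz | hapos
    · -- a = 0 : x = γ t, c = b
      have hx0 : x = γ t := by
        rw [← dist_eq_zero, ← ha_def]; exact haz.symm
      have hcb : c = b := by rw [hc_def, hx0]; exact hab
      rw [← haz, hcb, Real.cosh_zero, one_mul]
    · by_contra hlt
      push_neg at hlt
      set k := cmpCos a b c with hk_def
      have hsa : 0 < Real.sinh a := Real.sinh_pos_iff.2 hapos
      have hsb : 0 < Real.sinh b := Real.sinh_pos_iff.2 hb
      have hk_pos : 0 < k := by
        rw [hk_def]; unfold cmpCos
        exact div_pos (by linarith) (mul_pos hsa hsb)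
      have hk_le : k ≤ 1 := by
        rw [hk_def]; unfold cmpCos
        rw [div_le_one (mul_pos hsa hsb)]
        have htr : |a - b| ≤ c := by
          have h := abs_dist_sub_le x (γ s) (γ t)
          rw [dist_comm (γ s) (γ t), hab, ← ha_def, ← hc_def] at h
          exact h
        have h2 : Real.cosh (a - b) ≤ Real.cosh c := by
          rw [Real.cosh_le_cosh, abs_of_nonneg hc0]
          exact htr
        rw [Real.cosh_sub] at h2; linarith
      have hca := Real.cosh_pos a
      set T := Real.sinh a * k / Real.cosh a with hT_def
      have hT : 0 < T := by rw [hT_def]; positivity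
      set ε := min b (T / 2) with hε_def
      have hε0 : 0 < ε := lt_min hb (by linarith)
      have hεb : ε ≤ b := min_le_left _ _
      have hεT : Real.cosh a * ε < Real.sinh a * k := by
        have h1 : ε ≤ T / 2 := min_le_right _ _
        have h2 : Real.cosh a * T = Real.sinh a * k := by
          rw [hT_def]; field_simp
        nlinarith [mul_pos hsa hk_pos]
      have hsε : 0 < Real.sinh ε := Real.sinh_pos_iff.2 hε0
      have hylt : Real.cosh a * Real.cosh ε - Real.sinh a * Real.sinh ε * k < Real.cosh a := by
        have h1 := cosh_sub_one_le' ε hε0.le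
        nlinarith [mul_lt_mul_of_pos_right hεT hsε,
          mul_le_mul_of_nonneg_left h1 hca.le]
      have hyge : 1 ≤ Real.cosh a * Real.cosh ε - Real.sinh a * Real.sinh ε * k := by
        have h1 := Real.cosh_sub a ε
        nlinarith [Real.one_le_cosh (a - ε), mul_pos hsa hsε]
      -- comparison 1: moving ε from γ t toward γ s gets strictly closer to x
      have hcomp := hX (γ t) x (γ s) (dist (γ t) x) ⟨dist_nonneg, le_rfl⟩ ε
        ⟨hε0.le, by rw [hab]; exact hεb⟩
      rw [G.geo_end] at hcomp
      rw [dist_comm (γ t) x, ← ha_def, hab, ← hc_def] at hcomp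
      have hcd : dist x (G.geo (γ t) (γ s) ε) < a := by
        refine lt_of_le_of_lt hcomp ?_
        unfold cmpDist
        rw [← hk_def]
        exact arcosh_lt' _ _ hapos hyge hylt
      -- comparison 2: identify G.geo (γ t) (γ s) ε with a point of γ
      set σ := (s - t) / b with hσ_def
      have hσb : σ * b = s - t := div_mul_cancel₀ _ hb.ne'
      set u := t + ε * σ with hu_def
      have habsσ : |σ| = 1 := by
        rw [hσ_def, abs_div, abs_sub_comm s t, ← hb_def, abs_of_pos hb]
        exact div_self hb.ne'
      have d1 : dist (γ t) (γ u) = ε := by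
        rw [hγ, hu_def, show t - (t + ε * σ) = -(ε * σ) by ring, abs_neg, abs_mul,
          habsσ, mul_one, abs_of_pos hε0]
      have d2 : dist (γ s) (γ u) = b - ε := by
        rw [hγ, hu_def, show s - (t + ε * σ) = σ * b - σ * ε by rw [hσb]; ring,
          ← mul_sub, abs_mul, habsσ, one_mul, abs_of_nonneg (by linarith)]
      have hcomp2 := hX (γ t) (γ s) (γ u) ε ⟨hε0.le, by rw [hab]; exact hεb⟩
        (dist (γ t) (γ u)) ⟨dist_nonneg, le_rfl⟩
      rw [G.geo_end, hab, d1, d2] at hcomp2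
      have hzero : cmpDist b ε (b - ε) ε ε = 0 := by
        unfold cmpDist cmpCos
        rw [Real.cosh_sub]
        have h1 : (Real.cosh b * Real.cosh ε -
            (Real.cosh b * Real.cosh ε - Real.sinh b * Real.sinh ε)) /
            (Real.sinh b * Real.sinh ε) = 1 := by
          rw [sub_sub_cancel]
          exact div_self (mul_pos hsb hsε).ne'
        rw [h1]
        have h2 : Real.cosh ε * Real.cosh ε - Real.sinh ε * Real.sinh ε * 1 = 1 := by
          linear_combination Real.cosh_sq_sub_sinh_sq ε
        rw [h2, arcosh_one']
      rw [hzero] at hcomp2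
      have heq : G.geo (γ t) (γ s) ε = γ u :=
        dist_eq_zero.1 (le_antisymm hcomp2 dist_nonneg)
      rw [heq] at hcd
      have hge : a ≤ dist x (γ u) := ht.2 (γ u) ⟨u, rfl⟩
      linarith
  -- conclude
  have hlow : a + b - c < 1.3 := by
    rcases lt_or_ge (a + b) 1.3 with h | h
    · linarith
    · have h1 := cosh_step' (a + b) h
      have h2 : (Real.cosh (a + b) + 1) / 2 ≤ Real.cosh a * Real.cosh b := by
        have e1 := Real.cosh_add a b
        have e2 := Real.cosh_sub a b
        have e3 := Real.one_le_cosh (a - b)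
        linarith
      have h3 : Real.cosh (a + b - 1.3) < Real.cosh c := by linarith
      have h4 : |a + b - 1.3| < |c| := Real.cosh_lt_cosh.1 h3
      have h5 : a + b - 1.3 ≤ |a + b - 1.3| := le_abs_self _
      rw [abs_of_nonneg hc0] at h4
      linarith
  rw [abs_lt]
  constructor <;> [linarith; linarith]

end
end

section
/- Let X be a proper geodesic CAT(−1) space. (1) For every R > 1 and x, y, z, w ∈ X, if w ∈ O_R(x,y) ∩ O_R(y,z), then the sequence (x, [y,z], w) is 6R-aligned. (2) For every R > 1 and x, y, z, w ∈ X, if (x, [y,z], w) is R-aligned and d(y,z) > 3R, then w ∈ O_{3R}(x,y) ∩ O_{3R}(y,z). -/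
/-!
Core definitions: proper geodesic CAT(−1) spaces, geodesic segments,
nearest-point projections, horofunction (= Gromov) boundary.
-/

noncomputable section

open Real Set Metric Filter Topology
open scoped ENNReal NNReal

namespace CatAux

theorem sqrt_sq_sub_one {E : ℝ} (hE : 1 ≤ E) :
    Real.sqrt (E ^ 2 - 1) * Real.sqrt (E ^ 2 - 1) = E ^ 2 - 1 :=
  Real.mul_self_sqrt (by nlinarith)

theorem arcosh_nonneg {E : ℝ} (hE : 1 ≤ E) : 0 ≤ _root_.arcosh E := by
  unfold _root_.arcosh
  have h1 : (1:ℝ) ≤ E + Real.sqrt (E ^ 2 - 1) := by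
    have := Real.sqrt_nonneg (E ^ 2 - 1); linarith
  exact Real.log_nonneg h1

theorem cosh_arcosh {E : ℝ} (hE : 1 ≤ E) : Real.cosh (_root_.arcosh E) = E := by
  have hs := Real.sqrt_nonneg (E ^ 2 - 1)
  have hu : (0:ℝ) < E + Real.sqrt (E ^ 2 - 1) := by linarith
  have hinv : (E + Real.sqrt (E ^ 2 - 1))⁻¹ = E - Real.sqrt (E ^ 2 - 1) := by
    exact inv_eq_of_mul_eq_one_right (by nlinarith [sqrt_sq_sub_one hE])
  rw [_root_.arcosh, Real.cosh_eq, Real.exp_log hu, Real.exp_neg, Real.exp_log hu, hinv]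
  ring

theorem arcosh_cosh {x : ℝ} (hx : 0 ≤ x) : _root_.arcosh (Real.cosh x) = x := by
  have h1 : Real.cosh x ^ 2 - 1 = Real.sinh x ^ 2 := by
    have := Real.cosh_sq_sub_sinh_sq x; linarith
  rw [_root_.arcosh, h1, Real.sqrt_sq (Real.sinh_nonneg_iff.2 hx), Real.cosh_add_sinh, Real.log_exp]

theorem le_arcosh_of_cosh_le {d E : ℝ} (hd : 0 ≤ d) (h : Real.cosh d ≤ E) : d ≤ _root_.arcosh E := by
  have hE : 1 ≤ E := le_trans (Real.one_le_cosh d) h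
  calc d = _root_.arcosh (Real.cosh d) := (arcosh_cosh hd).symm
    _ ≤ _root_.arcosh E := by
        unfold _root_.arcosh
        apply Real.log_le_log (by positivity)
        have : Real.sqrt (Real.cosh d ^ 2 - 1) ≤ Real.sqrt (E ^ 2 - 1) := by
          apply Real.sqrt_le_sqrt; nlinarith [Real.one_le_cosh d]
        linarith

theorem cosh_le_of_le_arcosh {d E : ℝ} (hE : 1 ≤ E) (h : d ≤ _root_.arcosh E) (hd : 0 ≤ d) :
    Real.cosh d ≤ E := by
  have h2 : Real.cosh d ≤ Real.cosh (_root_.arcosh E) := by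
    apply Real.cosh_le_cosh.2
    rw [abs_of_nonneg hd, abs_of_nonneg (arcosh_nonneg hE)]; exact h
  rwa [cosh_arcosh hE] at h2

theorem le_of_cosh_le_cosh {u v : ℝ} (hu : 0 ≤ u) (hv : 0 ≤ v)
    (h : Real.cosh u ≤ Real.cosh v) : u ≤ v := by
  have := Real.cosh_le_cosh.1 h
  rwa [abs_of_nonneg hu, abs_of_nonneg hv] at this

theorem arcosh_le_of_le_cosh {E c : ℝ} (hE : 1 ≤ E) (hc : 0 ≤ c)
    (h : E ≤ Real.cosh c) : _root_.arcosh E ≤ c :=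
  le_of_cosh_le_cosh (arcosh_nonneg hE) hc (by rwa [cosh_arcosh hE])

theorem sinh_le_mul_exp {v : ℝ} (hv : 0 ≤ v) : Real.sinh v ≤ v * Real.exp v := by
  have h1 : 1 - Real.exp (-(2*v)) ≤ 2*v := by
    have := Real.add_one_le_exp (-(2*v)); linarith
  have hAB : Real.exp v * Real.exp (-v) = 1 := by
    rw [← Real.exp_add]; norm_num
  have hBB : Real.exp (-(2*v)) = Real.exp (-v) * Real.exp (-v) := by
    rw [← Real.exp_add]; ring_nf
  rw [Real.sinh_eq]
  nlinarith [Real.exp_pos v, Real.exp_pos (-v)]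

theorem cosh_sub_one_le {v : ℝ} (hv : 0 ≤ v) :
    Real.cosh v - 1 ≤ v ^ 2 * Real.exp v / 2 := by
  have h1 : Real.cosh v - 1 = 2 * Real.sinh (v/2) ^ 2 := by
    have := Real.cosh_sq (v/2)
    have h2 : Real.cosh v = Real.cosh (v/2 + v/2) := by norm_num
    rw [h2, Real.cosh_add]; nlinarith
  have h3 := sinh_le_mul_exp (by linarith : (0:ℝ) ≤ v/2)
  have h4 : Real.sinh (v/2) ≥ 0 := Real.sinh_nonneg_iff.2 (by linarith)
  have h5 : Real.exp (v/2) ^ 2 = Real.exp v := by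
    rw [sq, ← Real.exp_add]; norm_num
  nlinarith [Real.exp_pos (v/2), Real.exp_pos v, sq_nonneg (Real.sinh (v/2))]

theorem one_add_sq_div_two_le_cosh (v : ℝ) : 1 + v ^ 2 / 2 ≤ Real.cosh v := by
  have h1 : Real.cosh v - 1 = 2 * Real.sinh (v/2) ^ 2 := by
    have := Real.cosh_sq (v/2)
    have h2 : Real.cosh v = Real.cosh (v/2 + v/2) := by norm_num
    rw [h2, Real.cosh_add]; nlinarith
  rcases le_total 0 v with hv | hv
  · have h3 : v/2 ≤ Real.sinh (v/2) := Real.self_le_sinh_iff.2 (by linarith)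
    nlinarith
  · have h3 : Real.sinh (v/2) ≤ v/2 := by
      have := Real.self_le_sinh_iff (x := -(v/2)) |>.2 (by linarith)
      have hn : Real.sinh (-(v/2)) = -Real.sinh (v/2) := Real.sinh_neg _
      linarith [this, hn.le, hn.ge]
    nlinarith

theorem arcosh_one_add_le {u : ℝ} (hu : 0 ≤ u) :
    _root_.arcosh (1 + u) ≤ Real.sqrt (2 * u) := by
  apply arcosh_le_of_le_cosh (by linarith) (Real.sqrt_nonneg _)
  have h := one_add_sq_div_two_le_cosh (Real.sqrt (2*u))
  rw [Real.sq_sqrt (by linarith : (0:ℝ) ≤ 2*u)] at h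
  linarith

theorem arcosh_exp_le {g : ℝ} (hg : 0 ≤ g) :
    _root_.arcosh (Real.exp g) ≤ g + Real.log 2 := by
  apply arcosh_le_of_le_cosh (Real.one_le_exp hg)
    (by positivity)
  rw [Real.cosh_eq, Real.exp_add, Real.exp_log (by norm_num : (0:ℝ) < 2)]
  nlinarith [Real.exp_pos (-(g + Real.log 2))]

theorem cosh_le_exp_of_nonneg {u : ℝ} (hu : 0 ≤ u) : Real.cosh u ≤ Real.exp u := by
  rw [Real.cosh_eq]
  have := Real.exp_le_exp.2 (by linarith : -u ≤ u)
  linarith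

end CatAux

section GeoAux
variable {X : Type*} [MetricSpace X] (G : GeodesicStructure X)

namespace GeodesicStructure

theorem dist_geo_left (x y : X) {t : ℝ} (ht : t ∈ Set.Icc 0 (dist x y)) :
    dist (G.geo x y t) x = t := by
  have h := G.geo_isom x y t ht 0 ⟨le_refl 0, dist_nonneg⟩
  rw [G.geo_zero] at h
  rw [h, sub_zero, abs_of_nonneg ht.1]

theorem dist_geo_right (x y : X) {t : ℝ} (ht : t ∈ Set.Icc 0 (dist x y)) :
    dist (G.geo x y t) y = dist x y - t := by
  have h := G.geo_isom x y t ht (dist x y) ⟨dist_nonneg, le_refl _⟩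
  rw [G.geo_end] at h
  rw [h, abs_of_nonpos (by linarith [ht.2])]
  ring

theorem geo_mem_seg (x y : X) {t : ℝ} (ht : t ∈ Set.Icc 0 (dist x y)) :
    G.geo x y t ∈ G.seg x y := ⟨t, ht, rfl⟩

theorem left_mem_seg (x y : X) : x ∈ G.seg x y :=
  ⟨0, ⟨le_refl 0, dist_nonneg⟩, G.geo_zero x y⟩

theorem right_mem_seg (x y : X) : y ∈ G.seg x y :=
  ⟨dist x y, ⟨dist_nonneg, le_refl _⟩, G.geo_end x y⟩

theorem seg_nonempty (x y : X) : (G.seg x y).Nonempty := ⟨x, G.left_mem_seg x y⟩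

theorem continuousOn_geo (x y : X) :
    ContinuousOn (G.geo x y) (Set.Icc 0 (dist x y)) := by
  apply LipschitzOnWith.continuousOn (K := 1)
  intro s hs t ht
  rw [edist_dist, G.geo_isom x y s hs t ht]
  rw [show |s - t| = dist s t from rfl]
  rw [← edist_dist]
  simp

theorem isCompact_seg (x y : X) : IsCompact (G.seg x y) :=
  isCompact_Icc.image_of_continuousOn (G.continuousOn_geo x y)

/-- On a segment, a point between two others is the geodesic point.  Requires CAT(-1). -/
theorem mem_seg_sum_dist {x y : X} {m : X} (hm : m ∈ G.seg x y) :
    dist x m + dist m y = dist x y := by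
  obtain ⟨t, ht, rfl⟩ := hm
  rw [dist_comm x, G.dist_geo_left x y ht, G.dist_geo_right x y ht]
  ring

/-- Existence of a nearest-point projection, with its parameter. -/
theorem exists_nearest (x y z : X) :
    ∃ t ∈ Set.Icc (0:ℝ) (dist y z),
      IsNearestPt (G.seg y z) x (G.geo y z t) := by
  have hne : (Set.Icc (0:ℝ) (dist y z)).Nonempty := ⟨0, le_refl 0, dist_nonneg⟩
  have hcont : ContinuousOn (fun t => dist x (G.geo y z t)) (Set.Icc 0 (dist y z)) :=
    (continuous_const.dist continuous_id).comp_continuousOn (G.continuousOn_geo y z)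
  obtain ⟨t, ht, hmin⟩ := isCompact_Icc.exists_isMinOn hne hcont
  refine ⟨t, ht, G.geo_mem_seg y z ht, ?_⟩
  rintro q ⟨s, hs, rfl⟩
  exact hmin hs

end GeodesicStructure

/-- Gromov product of `u`, `v` seen from `o`. -/
def gp {X : Type*} [MetricSpace X] (o u v : X) : ℝ :=
  (dist o u + dist o v - dist u v) / 2

theorem gp_nonneg {X : Type*} [MetricSpace X] (o u v : X) : 0 ≤ gp o u v := by
  have := dist_triangle u o v
  unfold gp
  rw [dist_comm u o] at this
  linarith

theorem gp_le_left {X : Type*} [MetricSpace X] (o u v : X) : gp o u v ≤ dist o u := by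
  have := dist_triangle o u v
  unfold gp
  linarith

theorem gp_comm {X : Type*} [MetricSpace X] (o u v : X) : gp o u v = gp o v u := by
  unfold gp; rw [dist_comm u v, dist_comm o u, dist_comm o v]; ring

theorem gp_le_right {X : Type*} [MetricSpace X] (o u v : X) : gp o u v ≤ dist o v := by
  rw [gp_comm]; exact gp_le_left o v u

theorem gp_add_gp {X : Type*} [MetricSpace X] (o u v : X) :
    gp o u v + gp u o v = dist o u := by
  unfold gp
  rw [dist_comm u o, dist_comm u v]
  ring

/-- A point metrically between `u` and `w` bounds the Gromov product. -/
theorem gp_le_of_between {X : Type*} [MetricSpace X] {o u w m : X}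
    (h : dist u m + dist m w = dist u w) : gp o u w ≤ dist o m := by
  have h1 := dist_triangle u o m  -- wrong? need dist o u ≤ dist o m + dist m u
  have h2 := dist_triangle o u m
  have h3 := dist_triangle o w m
  unfold gp
  have h4 : dist o u ≤ dist o m + dist u m := dist_triangle_right o u m
  have h5 : dist o w ≤ dist o m + dist w m := dist_triangle_right o w m
  rw [dist_comm w m] at h5
  linarith

end GeoAux

section CoreAux
open CatAux
variable {X : Type*} [MetricSpace X] {G : GeodesicStructure X}

theorem cmpCos_le_one {a b c : ℝ} (ha : 0 ≤ a) (hb : 0 ≤ b) (hc : |a - b| ≤ c) :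
    cmpCos a b c ≤ 1 := by
  rcases eq_or_lt_of_le (mul_nonneg (Real.sinh_nonneg_iff.2 ha) (Real.sinh_nonneg_iff.2 hb))
    with h | h
  · rw [cmpCos, ← h, div_zero]; norm_num
  · rw [cmpCos, div_le_one h]
    have h1 : Real.cosh (a - b) ≤ Real.cosh c := by
      apply Real.cosh_le_cosh.2
      rw [abs_of_nonneg (le_trans (abs_nonneg _) hc)]
      exact hc
    rw [Real.cosh_sub] at h1
    linarith

theorem sinh_le_sinh_mul_exp {t b : ℝ} (ht : 0 ≤ t) (htb : t ≤ b) :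
    Real.sinh t ≤ Real.sinh b * Real.exp (t - b) := by
  have e1 : Real.exp (t - b) = Real.exp t / Real.exp b := Real.exp_sub t b
  have e2 : Real.exp (t - 2*b) = Real.exp t / (Real.exp b * Real.exp b) := by
    rw [Real.exp_sub, show (2:ℝ)*b = b + b by ring, Real.exp_add]
  have e3 : Real.exp (-b) = 1 / Real.exp b := by rw [Real.exp_neg]; ring
  have e4 : Real.exp (-t) = 1 / Real.exp t := by rw [Real.exp_neg]; ring
  have key : Real.sinh b * Real.exp (t - b) - Real.sinh t
      = (Real.exp (-t) - Real.exp (t - 2*b)) / 2 := by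
    rw [Real.sinh_eq, Real.sinh_eq, e1, e2, e3, e4]
    have hb0 := Real.exp_ne_zero b
    have ht0' := Real.exp_ne_zero t
    field_simp
    ring
  have h2 : Real.exp (t - 2*b) ≤ Real.exp (-t) := Real.exp_le_exp.2 (by linarith)
  linarith

/-- The Stewart/comparison inequality (★). -/
theorem star (hX : G.IsCATNegOne) (x y z : X) {t : ℝ}
    (ht : t ∈ Set.Icc 0 (dist y z)) :
    Real.cosh (dist x (G.geo y z t)) * Real.sinh (dist y z) ≤
      Real.cosh (dist y x) * Real.sinh (dist y z - t) + Real.cosh (dist x z) * Real.sinh t := by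
  rcases eq_or_lt_of_le (dist_nonneg : (0:ℝ) ≤ dist y z) with ha | ha
  · have ht0 : t = 0 := by
      have h2 := ht.2; have h1 := ht.1
      rw [← ha] at h2
      linarith
    rw [ht0, ← ha]
    simp [Real.sinh_zero]
  rcases eq_or_lt_of_le (dist_nonneg : (0:ℝ) ≤ dist y x) with hb | hb
  · have hxy : y = x := dist_eq_zero.1 hb.symm
    have hd : dist x (G.geo y z t) = t := by
      conv_lhs => rw [← hxy]
      rw [dist_comm]
      exact G.dist_geo_left y z ht
    have hc2 : dist x z = dist y z := by conv_lhs => rw [← hxy]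
    rw [hd, ← hb, hc2, Real.cosh_zero, Real.sinh_sub]
    nlinarith [Real.one_le_cosh t, Real.one_le_cosh (dist y z),
      Real.sinh_nonneg_iff.2 ht.1, Real.sinh_nonneg_iff.2 (le_of_lt ha),
      Real.cosh_pos (dist y z), Real.cosh_pos t]
  -- main case
  have key := hX y x z (dist y x) ⟨le_of_lt hb, le_refl _⟩ t ht
  rw [G.geo_end y x] at key
  have hC : cmpCos (dist y x) (dist y z) (dist x z) ≤ 1 := by
    apply cmpCos_le_one (le_of_lt hb) (le_of_lt ha)
    have := abs_dist_sub_le x z y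
    rw [dist_comm x y, dist_comm z y] at this
    exact this
  have hsb : 0 ≤ Real.sinh (dist y x) := Real.sinh_nonneg_iff.2 (le_of_lt hb)
  have hst : 0 ≤ Real.sinh t := Real.sinh_nonneg_iff.2 ht.1
  have hE1 : 1 ≤ Real.cosh (dist y x) * Real.cosh t
      - Real.sinh (dist y x) * Real.sinh t * cmpCos (dist y x) (dist y z) (dist x z) := by
    have h1 : Real.sinh (dist y x) * Real.sinh t * cmpCos (dist y x) (dist y z) (dist x z)
        ≤ Real.sinh (dist y x) * Real.sinh t :=
      mul_le_of_le_one_right (mul_nonneg hsb hst) hC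
    have h2 := Real.one_le_cosh (dist y x - t)
    rw [Real.cosh_sub] at h2
    linarith
  have hcosh := cosh_le_of_le_arcosh hE1 key dist_nonneg
  have hsa : 0 < Real.sinh (dist y z) := Real.sinh_pos_iff.2 ha
  have hprod : Real.sinh (dist y x) * Real.sinh (dist y z)
        * cmpCos (dist y x) (dist y z) (dist x z)
      = Real.cosh (dist y x) * Real.cosh (dist y z) - Real.cosh (dist x z) := by
    rw [cmpCos]
    have h5 : Real.sinh (dist y x) * Real.sinh (dist y z) ≠ 0 := by positivity
    field_simp
  have hmul := mul_le_mul_of_nonneg_right hcosh (le_of_lt hsa)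
  rw [Real.sinh_sub]
  nlinarith [hmul]

/-- Betweenness: a point metrically between `p` and `r` lies on the geodesic. -/
theorem between_eq (hX : G.IsCATNegOne) {p r m : X}
    (h : dist p m + dist m r = dist p r) : G.geo p r (dist p m) = m := by
  rcases eq_or_lt_of_le (dist_nonneg : (0:ℝ) ≤ dist p r) with hL0 | hL0
  · have h1 : dist p m = 0 := by
      have h2 := dist_nonneg (x := p) (y := m)
      have h3 := dist_nonneg (x := m) (y := r)
      linarith [hL0.symm ▸ h]
    have h2 : p = m := dist_eq_zero.1 h1
    rw [h1, G.geo_zero]; exact h2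
  · have htmem : dist p m ∈ Set.Icc (0:ℝ) (dist p r) := by
      refine ⟨dist_nonneg, ?_⟩
      have := dist_nonneg (x := m) (y := r); linarith
    have hs := star hX m p r htmem
    rw [dist_comm p m] at hs
    rw [dist_comm m p] at hs
    have hmr : dist m r = dist p r - dist p m := by linarith
    rw [hmr] at hs
    have hsum : Real.cosh (dist p m) * Real.sinh (dist p r - dist p m)
        + Real.cosh (dist p r - dist p m) * Real.sinh (dist p m) = Real.sinh (dist p r) := by
      have h8 := Real.sinh_add (dist p m) (dist p r - dist p m)
      have h9 : dist p m + (dist p r - dist p m) = dist p r := by ring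
      rw [h9] at h8
      linarith
    have hsaL : 0 < Real.sinh (dist p r) := Real.sinh_pos_iff.2 hL0
    have hcosh1 : Real.cosh (dist m (G.geo p r (dist p m))) ≤ 1 := by nlinarith
    have hd0 : dist m (G.geo p r (dist p m)) ≤ 0 :=
      le_of_cosh_le_cosh dist_nonneg (le_refl 0) (by rwa [Real.cosh_zero])
    have hzero : dist m (G.geo p r (dist p m)) = 0 := le_antisymm hd0 dist_nonneg
    rw [dist_eq_zero] at hzero
    exact hzero.symm

/-- Sharp Fact 1: distance from the apex to the Gromov point on the opposite side. -/
theorem cosh_dist_gromov_pt (hX : G.IsCATNegOne) (x y z : X) :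
    Real.cosh (dist x (G.geo y z (gp y x z))) ≤ Real.exp (gp x y z) := by
  have hsmem : gp y x z ∈ Set.Icc (0:ℝ) (dist y z) := ⟨gp_nonneg y x z, gp_le_right y x z⟩
  have hg0 : 0 ≤ gp x y z := gp_nonneg x y z
  rcases eq_or_lt_of_le (dist_nonneg : (0:ℝ) ≤ dist y z) with ha | ha
  · have hdyz : dist y z = 0 := ha.symm
    have hyz : y = z := dist_eq_zero.1 hdyz
    have hs0 : gp y x z = 0 := by
      have := hsmem.2; rw [hdyz] at this
      exact le_antisymm this hsmem.1
    have hxz : dist x z = dist x y := by conv_lhs => rw [← hyz]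
    have hgval : gp x y z = dist x y := by rw [gp, hxz, hdyz]; ring
    rw [hs0, G.geo_zero, hgval]
    exact cosh_le_exp_of_nonneg dist_nonneg
  · have hs := star hX x y z hsmem
    have hsa : 0 < Real.sinh (dist y z) := Real.sinh_pos_iff.2 ha
    -- abbreviations as equalities
    have hb : dist y x = gp x y z + gp y x z := by
      rw [gp, gp, dist_comm x y, dist_comm x z]; ring
    have hc : dist x z = gp x y z + (dist y z - gp y x z) := by
      rw [gp, gp, dist_comm x y, dist_comm y z]; ring
    have hp10 : 0 ≤ gp y x z := hsmem.1
    have hp20 : 0 ≤ dist y z - gp y x z := by linarith [hsmem.2]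
    have ha12 : dist y z = gp y x z + (dist y z - gp y x z) := by ring
    have h2 : Real.cosh (dist y x) * Real.sinh (dist y z - gp y x z)
          + Real.cosh (dist x z) * Real.sinh (gp y x z)
        ≤ Real.exp (gp x y z) * Real.sinh (dist y z) := by
      rw [hb, hc, Real.cosh_add, Real.cosh_add, ← Real.cosh_add_sinh]
      conv_rhs => rw [ha12, Real.sinh_add]
      have e1 : 0 ≤ Real.sinh (gp y x z) := Real.sinh_nonneg_iff.2 hp10
      have e2 : 0 ≤ Real.sinh (dist y z - gp y x z) := Real.sinh_nonneg_iff.2 hp20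
      have e3 : 0 ≤ Real.sinh (gp x y z) := Real.sinh_nonneg_iff.2 hg0
      have e4 : 0 < Real.exp (-(gp y x z)) := Real.exp_pos _
      have e5 : 0 < Real.exp (-(dist y z - gp y x z)) := Real.exp_pos _
      have e6 := Real.cosh_sub_sinh (gp y x z)
      have e7 := Real.cosh_sub_sinh (dist y z - gp y x z)
      have k1 : 0 ≤ Real.sinh (gp x y z) * (Real.sinh (gp y x z)
          * (Real.cosh (dist y z - gp y x z) - Real.sinh (dist y z - gp y x z))) := by
        rw [e7]; exact mul_nonneg e3 (mul_nonneg e1 e5.le)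
      have k2 : 0 ≤ Real.sinh (gp x y z) * (Real.sinh (dist y z - gp y x z)
          * (Real.cosh (gp y x z) - Real.sinh (gp y x z))) := by
        rw [e6]; exact mul_nonneg e3 (mul_nonneg e2 e4.le)
      nlinarith [k1, k2]
    have hmono : Real.cosh (dist x (G.geo y z (gp y x z))) * Real.sinh (dist y z)
        ≤ Real.exp (gp x y z) * Real.sinh (dist y z) := le_trans hs h2
    exact le_of_mul_le_mul_right hmono hsa

end CoreAux

section CoreAux2
open CatAux
variable {X : Type*} [MetricSpace X] {G : GeodesicStructure X}

/-- Thin-triangle estimate (Fact T'). -/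
theorem dist_geo_geo_le (hX : G.IsCATNegOne) (y x z : X) {t : ℝ}
    (ht0 : 0 ≤ t) (htp : t ≤ gp y x z) :
    dist (G.geo y x t) (G.geo y z t) ≤ Real.exp (t - gp y x z) := by
  have htb : t ≤ dist y x := le_trans htp (gp_le_left y x z)
  have hta : t ≤ dist y z := le_trans htp (gp_le_right y x z)
  rcases eq_or_lt_of_le (dist_nonneg : (0:ℝ) ≤ dist y x) with hb | hb
  · have ht' : t = 0 := by
      have := gp_le_left y x z; linarith
    rw [ht', G.geo_zero, G.geo_zero, dist_self]
    positivity
  rcases eq_or_lt_of_le (dist_nonneg : (0:ℝ) ≤ dist y z) with ha | ha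
  · have ht' : t = 0 := by
      have := gp_le_right y x z; linarith
    rw [ht', G.geo_zero, G.geo_zero, dist_self]
    positivity
  have key := hX y x z t ⟨ht0, htb⟩ t ⟨ht0, hta⟩
  have hC : cmpCos (dist y x) (dist y z) (dist x z) ≤ 1 := by
    apply cmpCos_le_one (le_of_lt hb) (le_of_lt ha)
    have := abs_dist_sub_le x z y
    rw [dist_comm x y, dist_comm z y] at this
    exact this
  have hst : 0 ≤ Real.sinh t := Real.sinh_nonneg_iff.2 ht0
  have hE1 : 1 ≤ Real.cosh t * Real.cosh t
      - Real.sinh t * Real.sinh t * cmpCos (dist y x) (dist y z) (dist x z) := by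
    have h1 : Real.sinh t * Real.sinh t * cmpCos (dist y x) (dist y z) (dist x z)
        ≤ Real.sinh t * Real.sinh t := mul_le_of_le_one_right (mul_nonneg hst hst) hC
    nlinarith [Real.cosh_sq_sub_sinh_sq t]
  have hcosh := cosh_le_of_le_arcosh hE1 key dist_nonneg
  -- bound E
  have hsb : 0 < Real.sinh (dist y x) := Real.sinh_pos_iff.2 hb
  have hsa : 0 < Real.sinh (dist y z) := Real.sinh_pos_iff.2 ha
  have hprod : Real.sinh (dist y x) * Real.sinh (dist y z)
        * cmpCos (dist y x) (dist y z) (dist x z)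
      = Real.cosh (dist y x) * Real.cosh (dist y z) - Real.cosh (dist x z) := by
    rw [cmpCos]
    have h5 : Real.sinh (dist y x) * Real.sinh (dist y z) ≠ 0 := by positivity
    field_simp
  have hr1 : Real.sinh t ≤ Real.sinh (dist y x) * Real.exp (t - dist y x) :=
    sinh_le_sinh_mul_exp ht0 htb
  have hr2 : Real.sinh t ≤ Real.sinh (dist y z) * Real.exp (t - dist y z) :=
    sinh_le_sinh_mul_exp ht0 hta
  have hcnum : 0 ≤ Real.cosh (dist x z) - Real.cosh (dist y x - dist y z) := by
    have h1 : Real.cosh (dist y x - dist y z) ≤ Real.cosh (dist x z) := by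
      apply Real.cosh_le_cosh.2
      rw [abs_of_nonneg dist_nonneg]
      have := abs_dist_sub_le x z y
      rw [dist_comm x y, dist_comm z y] at this
      exact this
    linarith
  have hcnum2 : Real.cosh (dist x z) - Real.cosh (dist y x - dist y z)
      ≤ Real.exp (dist x z) / 2 := by
    have h1 := Real.one_le_cosh (dist y x - dist y z)
    rw [Real.cosh_eq]
    have h3 : Real.exp (-(dist x z)) ≤ 1 := Real.exp_le_one_iff.2 (by
      have := dist_nonneg (x := x) (y := z); linarith)
    linarith
  -- E - 1 = sinh t ^2 (1 - C) and bound it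
  have hkey : Real.cosh t * Real.cosh t
        - Real.sinh t * Real.sinh t * cmpCos (dist y x) (dist y z) (dist x z)
      ≤ 1 + Real.exp (2 * (t - gp y x z)) / 2 := by
    have hfrac : Real.sinh t * Real.sinh t
          * (Real.sinh (dist y x) * Real.sinh (dist y z)
              - (Real.cosh (dist y x) * Real.cosh (dist y z) - Real.cosh (dist x z)))
        ≤ Real.sinh (dist y x) * Real.sinh (dist y z)
            * (Real.exp (t - dist y x) * Real.exp (t - dist y z) * (Real.exp (dist x z) / 2)) := by
      have hcs : Real.sinh (dist y x) * Real.sinh (dist y z)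
          - (Real.cosh (dist y x) * Real.cosh (dist y z) - Real.cosh (dist x z))
          = Real.cosh (dist x z) - Real.cosh (dist y x - dist y z) := by
        rw [Real.cosh_sub]; ring
      rw [hcs]
      have e1 : 0 < Real.exp (t - dist y x) := Real.exp_pos _
      have e2 : 0 < Real.exp (t - dist y z) := Real.exp_pos _
      calc Real.sinh t * Real.sinh t
            * (Real.cosh (dist x z) - Real.cosh (dist y x - dist y z))
          ≤ (Real.sinh (dist y x) * Real.exp (t - dist y x))
            * (Real.sinh (dist y z) * Real.exp (t - dist y z))
            * (Real.cosh (dist x z) - Real.cosh (dist y x - dist y z)) := by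
            apply mul_le_mul_of_nonneg_right _ hcnum
            have := mul_le_mul hr1 hr2 hst (by positivity)
            linarith [this]
        _ ≤ (Real.sinh (dist y x) * Real.exp (t - dist y x))
            * (Real.sinh (dist y z) * Real.exp (t - dist y z)) * (Real.exp (dist x z) / 2) := by
            apply mul_le_mul_of_nonneg_left hcnum2 (by positivity)
        _ = Real.sinh (dist y x) * Real.sinh (dist y z)
            * (Real.exp (t - dist y x) * Real.exp (t - dist y z) * (Real.exp (dist x z) / 2)) := by
            ring
    have hSpos : 0 < Real.sinh (dist y x) * Real.sinh (dist y z) := by positivity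
    have hdiv : Real.sinh t * Real.sinh t
          - Real.sinh t * Real.sinh t * cmpCos (dist y x) (dist y z) (dist x z)
        ≤ Real.exp (t - dist y x) * Real.exp (t - dist y z) * (Real.exp (dist x z) / 2) := by
      have h6 : Real.sinh t * Real.sinh t
            * (Real.sinh (dist y x) * Real.sinh (dist y z))
            - Real.sinh t * Real.sinh t
            * (Real.sinh (dist y x) * Real.sinh (dist y z)
               * cmpCos (dist y x) (dist y z) (dist x z))
          ≤ Real.sinh (dist y x) * Real.sinh (dist y z)
            * (Real.exp (t - dist y x) * Real.exp (t - dist y z) * (Real.exp (dist x z) / 2)) := by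
        nlinarith [hfrac, hprod]
      nlinarith [h6, hSpos]
    have hexp0 : Real.exp (t - dist y x) * Real.exp (t - dist y z) * Real.exp (dist x z)
        = Real.exp (2 * (t - gp y x z)) := by
      rw [← Real.exp_add, ← Real.exp_add]
      congr 1
      rw [gp]; ring
    have hexp : Real.exp (t - dist y x) * Real.exp (t - dist y z) * (Real.exp (dist x z) / 2)
        = Real.exp (2 * (t - gp y x z)) / 2 := by
      rw [← hexp0]; ring
    nlinarith [Real.cosh_sq_sub_sinh_sq t, hdiv]
  -- conclude
  have h7 : Real.cosh (dist (G.geo y x t) (G.geo y z t))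
      ≤ 1 + Real.exp (2 * (t - gp y x z)) / 2 := le_trans hcosh hkey
  have h8 := le_arcosh_of_cosh_le dist_nonneg h7
  have h9 := arcosh_one_add_le (u := Real.exp (2 * (t - gp y x z)) / 2) (by positivity)
  have h10 : Real.sqrt (2 * (Real.exp (2 * (t - gp y x z)) / 2)) = Real.exp (t - gp y x z) := by
    rw [show 2 * (Real.exp (2 * (t - gp y x z)) / 2) = Real.exp (2 * (t - gp y x z)) by ring]
    rw [show 2 * (t - gp y x z) = (t - gp y x z) + (t - gp y x z) by ring, Real.exp_add]
    exact Real.sqrt_mul_self (Real.exp_pos _).le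
  rw [h10] at h9
  linarith

end CoreAux2

section CoreAux3
open CatAux
variable {X : Type*} [MetricSpace X] {G : GeodesicStructure X}

/-- Doubling lemma: if `p` minimizes distance to `x` along the segment `[p,r]`,
then the projection inequality holds. -/
theorem cosh_dist_proj (hX : G.IsCATNegOne) {x p r : X}
    (hmin : ∀ s ∈ Set.Icc (0:ℝ) (dist p r), dist x p ≤ dist x (G.geo p r s)) :
    Real.cosh (dist x p) * Real.cosh (dist p r) ≤ Real.cosh (dist x r) := by
  have hL0 : (0:ℝ) ≤ dist p r := dist_nonneg
  -- step inequality
  have hstep : ∀ σ ∈ Set.Icc (0:ℝ) (dist p r), 0 < σ →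
      2 * Real.cosh (σ/2) * Real.cosh (dist x (G.geo p r (σ/2)))
        ≤ Real.cosh (dist x p) + Real.cosh (dist x (G.geo p r σ)) := by
    intro σ hσ hσ0
    have hhalf : σ/2 ∈ Set.Icc (0:ℝ) (dist p r) := ⟨by linarith, by linarith [hσ.2]⟩
    have hdpm' : dist p (G.geo p r σ) = σ := by
      rw [dist_comm]; exact G.dist_geo_left p r hσ
    have hdpmm : dist p (G.geo p r (σ/2)) = σ/2 := by
      rw [dist_comm]; exact G.dist_geo_left p r hhalf
    have hdmm' : dist (G.geo p r (σ/2)) (G.geo p r σ) = σ/2 := by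
      rw [G.geo_isom p r (σ/2) hhalf σ hσ, abs_of_nonpos (by linarith)]; ring
    have hbtw : G.geo p (G.geo p r σ) (dist p (G.geo p r (σ/2))) = G.geo p r (σ/2) := by
      apply between_eq hX
      rw [hdpmm, hdmm', hdpm']; ring
    rw [hdpmm] at hbtw
    have hmem2 : σ/2 ∈ Set.Icc (0:ℝ) (dist p (G.geo p r σ)) := by
      rw [hdpm']; exact ⟨by linarith, by linarith⟩
    have hs := star hX x p (G.geo p r σ) hmem2
    rw [hbtw, hdpm'] at hs
    -- hs : cosh (dist x (geo p r (σ/2))) * sinh σ ≤ cosh (dist p x) * sinh (σ - σ/2) + cosh (dist x (geo p r σ)) * sinh (σ/2)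
    have hsinh : Real.sinh σ = 2 * Real.sinh (σ/2) * Real.cosh (σ/2) := by
      have := Real.sinh_add (σ/2) (σ/2)
      rw [show σ/2 + σ/2 = σ by ring] at this
      linarith
    have hhalfsub : σ - σ/2 = σ/2 := by ring
    rw [hhalfsub, hsinh, dist_comm p x] at hs
    have hsh : 0 < Real.sinh (σ/2) := Real.sinh_pos_iff.2 (by linarith)
    nlinarith [hs, hsh]
  -- main induction
  have hmain : ∀ n : ℕ, ∀ σ ∈ Set.Icc (0:ℝ) (dist p r),
      Real.cosh (dist x p) * (Real.cosh σ - σ^2 * Real.exp (2*σ) / 2^n)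
        ≤ Real.cosh (dist x (G.geo p r σ)) := by
    intro n
    induction n with
    | zero =>
      intro σ hσ
      have h1 : Real.cosh (dist x p) ≤ Real.cosh (dist x (G.geo p r σ)) := by
        apply Real.cosh_le_cosh.2
        rw [abs_of_nonneg dist_nonneg, abs_of_nonneg dist_nonneg]
        exact hmin σ hσ
      have h2 : Real.cosh σ - σ^2 * Real.exp (2*σ) ≤ 1 := by
        have h3 := cosh_sub_one_le hσ.1
        have h4 : Real.exp σ ≤ Real.exp (2*σ) := Real.exp_le_exp.2 (by linarith [hσ.1])
        nlinarith [sq_nonneg σ, Real.exp_pos σ]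
      have h5 : (0:ℝ) < Real.cosh (dist x p) := Real.cosh_pos _
      calc Real.cosh (dist x p) * (Real.cosh σ - σ^2 * Real.exp (2*σ) / 2^0)
          ≤ Real.cosh (dist x p) * 1 := by
            apply mul_le_mul_of_nonneg_left _ h5.le
            norm_num
            linarith
        _ ≤ _ := by rw [mul_one]; exact h1
    | succ n ih =>
      intro σ hσ
      rcases eq_or_lt_of_le hσ.1 with h0 | h0
      · rw [← h0]
        have h2 : Real.cosh (dist x p) ≤ Real.cosh (dist x (G.geo p r 0)) := by
          apply Real.cosh_le_cosh.2
          rw [abs_of_nonneg dist_nonneg, abs_of_nonneg dist_nonneg]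
          exact hmin 0 ⟨le_refl 0, hL0⟩
        have h6 : Real.cosh (0:ℝ) - 0^2 * Real.exp (2*0) / 2^(n+1) = 1 := by
          norm_num
        rw [h6, mul_one]
        exact h2
      · have hhalf : σ/2 ∈ Set.Icc (0:ℝ) (dist p r) := ⟨by linarith, by linarith [hσ.2]⟩
        have hih := ih (σ/2) hhalf
        have hst := hstep σ hσ h0
        have hcc : Real.cosh σ = 2 * Real.cosh (σ/2) * Real.cosh (σ/2) - 1 := by
          have h1 := Real.cosh_add (σ/2) (σ/2)
          rw [show σ/2 + σ/2 = σ by ring] at h1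
          have h2 := Real.cosh_sq_sub_sinh_sq (σ/2)
          nlinarith
        have hch : (0:ℝ) < Real.cosh (σ/2) := Real.cosh_pos _
        have hxp : (0:ℝ) < Real.cosh (dist x p) := Real.cosh_pos _
        have hbound : Real.cosh (σ/2) * Real.exp σ ≤ Real.exp (2*σ) := by
          have h1 : Real.cosh (σ/2) ≤ Real.exp (σ/2) := cosh_le_exp_of_nonneg (by linarith)
          have h2 : Real.exp (σ/2) * Real.exp σ = Real.exp (3*σ/2) := by
            rw [← Real.exp_add]; congr 1; ring
          have h3 : Real.exp (3*σ/2) ≤ Real.exp (2*σ) := Real.exp_le_exp.2 (by linarith)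
          nlinarith [Real.exp_pos σ]
        have hgoal : Real.cosh (dist x p) * (Real.cosh σ - σ^2 * Real.exp (2*σ) / 2^(n+1))
            ≤ 2 * Real.cosh (σ/2)
              * (Real.cosh (dist x p) * (Real.cosh (σ/2) - (σ/2)^2 * Real.exp (2*(σ/2)) / 2^n))
              - Real.cosh (dist x p) := by
          have hexp : 2*(σ/2) = σ := by ring
          have hd : (0:ℝ) ≤ σ^2/2^(n+1) := by positivity
          have heq1 : (σ/2)^2 * Real.exp σ / 2^n = (σ^2/2^(n+1)) * (Real.exp σ / 2) := by
            rw [show ((2:ℝ)^(n+1)) = 2*2^n by ring]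
            field_simp
          have heq2 : σ^2 * Real.exp (2*σ) / 2^(n+1) = (σ^2/2^(n+1)) * Real.exp (2*σ) := by
            field_simp
          rw [hcc, hexp, heq1, heq2]
          have hfin : 0 ≤ Real.cosh (dist x p) *
              ((σ^2/2^(n+1)) * (Real.exp (2*σ) - Real.cosh (σ/2) * Real.exp σ)) :=
            mul_nonneg hxp.le (mul_nonneg hd (by linarith [hbound]))
          nlinarith [hfin]
        calc Real.cosh (dist x p) * (Real.cosh σ - σ^2 * Real.exp (2*σ) / 2^(n+1))
            ≤ 2 * Real.cosh (σ/2)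
              * (Real.cosh (dist x p) * (Real.cosh (σ/2) - (σ/2)^2 * Real.exp (2*(σ/2)) / 2^n))
              - Real.cosh (dist x p) := hgoal
          _ ≤ 2 * Real.cosh (σ/2) * Real.cosh (dist x (G.geo p r (σ/2)))
              - Real.cosh (dist x p) := by
              have := mul_le_mul_of_nonneg_left hih (by positivity : (0:ℝ) ≤ 2 * Real.cosh (σ/2))
              linarith
          _ ≤ Real.cosh (dist x (G.geo p r σ)) := by linarith [hst]
  -- take the limit
  have hLmem : dist p r ∈ Set.Icc (0:ℝ) (dist p r) := ⟨hL0, le_refl _⟩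
  have hseq : ∀ n : ℕ, Real.cosh (dist x p) * Real.cosh (dist p r)
      - Real.cosh (dist x p) * ((dist p r)^2 * Real.exp (2*(dist p r))) * (1/2)^n
      ≤ Real.cosh (dist x r) := by
    intro n
    have := hmain n (dist p r) hLmem
    rw [G.geo_end] at this
    have heq : Real.cosh (dist x p) * (Real.cosh (dist p r)
        - (dist p r)^2 * Real.exp (2*(dist p r)) / 2^n)
        = Real.cosh (dist x p) * Real.cosh (dist p r)
          - Real.cosh (dist x p) * ((dist p r)^2 * Real.exp (2*(dist p r))) * (1/2)^n := by
      rw [div_pow, one_pow]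
      field_simp
    linarith [heq ▸ this]
  have htends : Filter.Tendsto (fun n : ℕ => Real.cosh (dist x p) * Real.cosh (dist p r)
      - Real.cosh (dist x p) * ((dist p r)^2 * Real.exp (2*(dist p r))) * (1/2)^n)
      Filter.atTop (nhds (Real.cosh (dist x p) * Real.cosh (dist p r))) := by
    have h1 : Filter.Tendsto (fun n : ℕ => ((1:ℝ)/2)^n) Filter.atTop (nhds 0) :=
      tendsto_pow_atTop_nhds_zero_of_lt_one (by norm_num) (by norm_num)
    have h2 := h1.const_mul (Real.cosh (dist x p) * ((dist p r)^2 * Real.exp (2*(dist p r))))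
    rw [mul_zero] at h2
    have h3 : Filter.Tendsto (fun _ : ℕ => Real.cosh (dist x p) * Real.cosh (dist p r))
        Filter.atTop (nhds (Real.cosh (dist x p) * Real.cosh (dist p r))) :=
      tendsto_const_nhds
    have h4 := h3.sub h2
    rw [sub_zero] at h4
    exact h4
  exact le_of_tendsto htends (Filter.Eventually.of_forall hseq)

/-- Lemma Q: nearest-point projection inequality in CAT(-1). -/
theorem cosh_dist_nearest (hX : G.IsCATNegOne) {y z x : X} {tp : ℝ}
    (htp : tp ∈ Set.Icc (0:ℝ) (dist y z))
    (hnear : IsNearestPt (G.seg y z) x (G.geo y z tp))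
    {τ : ℝ} (hτ : τ ∈ Set.Icc (0:ℝ) (dist y z)) :
    Real.cosh (dist x (G.geo y z tp)) * Real.cosh (τ - tp)
      ≤ Real.cosh (dist x (G.geo y z τ)) := by
  have hdpr : dist (G.geo y z tp) (G.geo y z τ) = |tp - τ| := G.geo_isom y z tp htp τ hτ
  have hmin : ∀ s ∈ Set.Icc (0:ℝ) (dist (G.geo y z tp) (G.geo y z τ)),
      dist x (G.geo y z tp) ≤ dist x (G.geo (G.geo y z tp) (G.geo y z τ) s) := by
    intro s hs
    have hs' := hs
    rw [hdpr] at hs'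
    -- the point geo p r s equals a point of seg y z
    have key : G.geo (G.geo y z tp) (G.geo y z τ) s ∈ G.seg y z := by
      rcases le_total tp τ with hc | hc
      · have habs : |tp - τ| = τ - tp := by rw [abs_of_nonpos (by linarith)]; ring
        have humem : tp + s ∈ Set.Icc (0:ℝ) (dist y z) := by
          constructor
          · linarith [htp.1, hs'.1]
          · rw [habs] at hs'; linarith [hτ.2, hs'.2]
        have h1 : dist (G.geo y z tp) (G.geo y z (tp+s)) = s := by
          rw [G.geo_isom y z tp htp (tp+s) humem, abs_of_nonpos (by linarith [hs'.1])]; ring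
        have h2 : dist (G.geo y z (tp+s)) (G.geo y z τ) = |tp - τ| - s := by
          rw [G.geo_isom y z (tp+s) humem τ hτ, habs, abs_of_nonpos (by rw [habs] at hs'; linarith [hs'.2])]
          ring
        have hbtw := between_eq hX (p := G.geo y z tp) (r := G.geo y z τ)
          (m := G.geo y z (tp+s)) (by rw [h1, h2, hdpr]; ring)
        rw [h1] at hbtw
        rw [hbtw]
        exact G.geo_mem_seg y z humem
      · have habs : |tp - τ| = tp - τ := by rw [abs_of_nonneg (by linarith)]
        have humem : tp - s ∈ Set.Icc (0:ℝ) (dist y z) := by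
          constructor
          · rw [habs] at hs'; linarith [hτ.1, hs'.2]
          · linarith [htp.2, hs'.1]
        have h1 : dist (G.geo y z tp) (G.geo y z (tp-s)) = s := by
          rw [G.geo_isom y z tp htp (tp-s) humem, abs_of_nonneg (by linarith [hs'.1])]; ring
        have h2 : dist (G.geo y z (tp-s)) (G.geo y z τ) = |tp - τ| - s := by
          rw [G.geo_isom y z (tp-s) humem τ hτ, habs, abs_of_nonneg (by rw [habs] at hs'; linarith [hs'.2])]
          ring
        have hbtw := between_eq hX (p := G.geo y z tp) (r := G.geo y z τ)
          (m := G.geo y z (tp-s)) (by rw [h1, h2, hdpr]; ring)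
        rw [h1] at hbtw
        rw [hbtw]
        exact G.geo_mem_seg y z humem
    exact hnear.2 _ key
  have hproj := cosh_dist_proj hX (x := x) (p := G.geo y z tp) (r := G.geo y z τ) hmin
  rw [hdpr] at hproj
  have habs2 : Real.cosh |tp - τ| = Real.cosh (τ - tp) := by
    rw [Real.cosh_abs, ← Real.cosh_neg]; norm_num
  rw [habs2] at hproj
  exact hproj

end CoreAux3

namespace CatAux
open Filter Topology

theorem hasDerivAt_arcosh {x : ℝ} (hx : 1 < x) :
    HasDerivAt _root_.arcosh (1 / Real.sqrt (x^2 - 1)) x := by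
  have hx2 : x^2 - 1 ≠ 0 := by nlinarith
  have hs : 0 < Real.sqrt (x^2 - 1) := Real.sqrt_pos.2 (by nlinarith)
  have hinner : HasDerivAt (fun y : ℝ => y^2 - 1) (2*x) x := by
    simpa using ((hasDerivAt_pow 2 x).sub_const 1)
  have hsqrt : HasDerivAt (fun y : ℝ => Real.sqrt (y^2 - 1))
      (1 / (2 * Real.sqrt (x^2-1)) * (2*x)) x :=
    (Real.hasDerivAt_sqrt hx2).comp x hinner
  have hsum : HasDerivAt (fun y : ℝ => y + Real.sqrt (y^2 - 1))
      (1 + 1 / (2 * Real.sqrt (x^2-1)) * (2*x)) x :=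
    (hasDerivAt_id x).add hsqrt
  have hpos : x + Real.sqrt (x^2 - 1) ≠ 0 := by
    have := Real.sqrt_nonneg (x^2-1); nlinarith
  have hlog := hsum.log hpos
  have heq : (1 + 1 / (2 * Real.sqrt (x^2-1)) * (2*x)) / (x + Real.sqrt (x^2 - 1))
      = 1 / Real.sqrt (x^2 - 1) := by
    rw [div_eq_div_iff hpos (ne_of_gt hs)]
    have h2 : Real.sqrt (x^2-1) * Real.sqrt (x^2-1) = x^2 - 1 :=
      Real.mul_self_sqrt (by nlinarith)
    field_simp
    nlinarith [h2]
  rw [heq] at hlog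
  exact hlog

theorem tendsto_sinh_div :
    Tendsto (fun v : ℝ => Real.sinh v / v) (𝓝[≠] (0:ℝ)) (𝓝 1) := by
  have h := hasDerivAt_iff_tendsto_slope.1 (Real.hasDerivAt_sinh 0)
  rw [Real.cosh_zero] at h
  apply h.congr'
  filter_upwards [self_mem_nhdsWithin] with v hv
  rw [slope_def_field, Real.sinh_zero, sub_zero, sub_zero]

theorem tendsto_into_punctured {f : ℝ → ℝ} {l : Filter ℝ}
    (h0 : Tendsto f l (𝓝 0)) (hne : ∀ᶠ v in l, f v ≠ 0) :
    Tendsto f l (𝓝[≠] (0:ℝ)) := by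
  rw [tendsto_nhdsWithin_iff]
  refine ⟨h0, ?_⟩
  filter_upwards [hne] with v hv
  simpa using hv

theorem tendsto_cosh_sub_one_div_sq :
    Tendsto (fun v : ℝ => (Real.cosh v - 1) / v^2) (𝓝[≠] (0:ℝ)) (𝓝 (1/2)) := by
  have hhalf : Tendsto (fun v : ℝ => v/2) (𝓝[≠] (0:ℝ)) (𝓝[≠] (0:ℝ)) := by
    apply tendsto_into_punctured
    · have h1 : Tendsto (fun v : ℝ => v/2) (nhds 0) (nhds ((0:ℝ)/2)) :=
        (continuous_id.div_const 2).tendsto 0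
      rw [zero_div] at h1
      exact h1.mono_left nhdsWithin_le_nhds
    · filter_upwards [self_mem_nhdsWithin] with v hv
      simp only [Set.mem_compl_iff, Set.mem_singleton_iff] at hv
      intro hc; exact hv (by linarith)
  have hcomp := tendsto_sinh_div.comp hhalf
  have hsq := hcomp.mul hcomp
  rw [mul_one] at hsq
  have hfin := hsq.div_const 2
  apply hfin.congr'
  filter_upwards [self_mem_nhdsWithin] with v hv
  simp only [Set.mem_compl_iff, Set.mem_singleton_iff] at hv
  have hv2 : v/2 ≠ 0 := fun hc => hv (by linarith)
  have hc1 : Real.cosh v - 1 = 2 * Real.sinh (v/2)^2 := by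
    have h1 := Real.cosh_add (v/2) (v/2)
    rw [show v/2 + v/2 = v by ring] at h1
    have h2 := Real.cosh_sq_sub_sinh_sq (v/2)
    nlinarith
  show Real.sinh (v/2) / (v/2) * (Real.sinh (v/2) / (v/2)) / 2 = (Real.cosh v - 1) / v^2
  rw [hc1]
  field_simp

/-- Abstract second-order limit argument for the quadrilateral inequality. -/
theorem abstract_limit {Δ C₂ Cs κ εmax : ℝ} (hΔ : 0 < Δ) (hC₂0 : 0 ≤ C₂) (hC₂1 : C₂ ≤ 1)
    (hCs : Cs ≤ 1) (hκ : 0 < κ) (hε : 0 < εmax)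
    (hchain : ∀ σ : ℝ, 0 < σ → σ < εmax →
      0 < _root_.arcosh (Real.cosh σ * Real.cosh Δ)
          - _root_.arcosh (Real.cosh (κ*σ) * Real.cosh Δ - Real.sinh (κ*σ) * Real.sinh Δ * C₂) →
      Real.sinh σ * Real.sinh (κ*σ) * Cs
        ≤ Real.cosh σ * Real.cosh (κ*σ)
          - Real.cosh (_root_.arcosh (Real.cosh σ * Real.cosh Δ)
              - _root_.arcosh (Real.cosh (κ*σ) * Real.cosh Δ - Real.sinh (κ*σ) * Real.sinh Δ * C₂))) :
    Cs ≤ (1 + κ^2*(1 - C₂^2))/(2*κ) := by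
  rcases eq_or_lt_of_le hC₂0 with hC₂z | hC₂p
  · -- C₂ = 0 : AM-GM
    rw [← hC₂z]
    rw [le_div_iff₀ (by linarith)]
    nlinarith [sq_nonneg (κ - 1), hCs, hκ]
  -- C₂ > 0 : limit argument
  set A : ℝ → ℝ := fun σ => _root_.arcosh (Real.cosh σ * Real.cosh Δ) with hAdef
  set B : ℝ → ℝ := fun σ =>
    _root_.arcosh (Real.cosh (κ*σ) * Real.cosh Δ - Real.sinh (κ*σ) * Real.sinh Δ * C₂) with hBdef
  have hcoshΔ : 1 < Real.cosh Δ := Real.one_lt_cosh.2 (ne_of_gt hΔ)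
  have hsinhΔ : 0 < Real.sinh Δ := Real.sinh_pos_iff.2 hΔ
  have hsqrtΔ : Real.sqrt ((Real.cosh Δ)^2 - 1) = Real.sinh Δ := by
    rw [show (Real.cosh Δ)^2 - 1 = (Real.sinh Δ)^2 by
      have := Real.cosh_sq_sub_sinh_sq Δ; linarith]
    exact Real.sqrt_sq hsinhΔ.le
  -- derivative of A at 0 is 0
  have hA : HasDerivAt A 0 0 := by
    have hf : HasDerivAt (fun σ : ℝ => Real.cosh σ * Real.cosh Δ)
        (Real.sinh 0 * Real.cosh Δ) 0 := (Real.hasDerivAt_cosh 0).mul_const _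
    have hf0 : (1:ℝ) < Real.cosh 0 * Real.cosh Δ := by
      rw [Real.cosh_zero, one_mul]; exact hcoshΔ
    have hcomp := (hasDerivAt_arcosh hf0).comp 0 hf
    rw [Real.sinh_zero, zero_mul, mul_zero] at hcomp
    exact hcomp
  -- derivative of B at 0 is -κ C₂
  have hB : HasDerivAt B (-(κ*C₂)) 0 := by
    have hf1 : HasDerivAt (fun σ : ℝ => Real.cosh (κ*σ))
        (Real.sinh (κ*0) * κ) 0 := by
      have hlin : HasDerivAt (fun σ : ℝ => κ*σ) κ 0 := by
        simpa using (hasDerivAt_id (0:ℝ)).const_mul κ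
      exact (Real.hasDerivAt_cosh (κ*0)).comp 0 hlin
    have hf2 : HasDerivAt (fun σ : ℝ => Real.sinh (κ*σ))
        (Real.cosh (κ*0) * κ) 0 := by
      have hlin : HasDerivAt (fun σ : ℝ => κ*σ) κ 0 := by
        simpa using (hasDerivAt_id (0:ℝ)).const_mul κ
      exact (Real.hasDerivAt_sinh (κ*0)).comp 0 hlin
    have hg : HasDerivAt (fun σ : ℝ =>
        Real.cosh (κ*σ) * Real.cosh Δ - Real.sinh (κ*σ) * Real.sinh Δ * C₂)
        (Real.sinh (κ*0) * κ * Real.cosh Δ - Real.cosh (κ*0) * κ * (Real.sinh Δ * C₂)) 0 := by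
      have h1 := hf1.mul_const (Real.cosh Δ)
      have h2 := (hf2.mul_const (Real.sinh Δ)).mul_const C₂
      have h3 := h1.sub h2
      exact h3.congr_deriv (by ring)
    have hg0 : (1:ℝ) < Real.cosh (κ*0) * Real.cosh Δ - Real.sinh (κ*0) * Real.sinh Δ * C₂ := by
      rw [mul_zero, Real.cosh_zero, Real.sinh_zero, one_mul, zero_mul, zero_mul, sub_zero]
      exact hcoshΔ
    have hcomp := (hasDerivAt_arcosh hg0).comp 0 hg
    rw [mul_zero, Real.cosh_zero, Real.sinh_zero, one_mul, zero_mul, zero_mul, sub_zero,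
      hsqrtΔ] at hcomp
    exact hcomp.congr_deriv (by field_simp; ring)
  have hAB : HasDerivAt (fun σ => A σ - B σ) (κ*C₂) 0 := by
    have := hA.sub hB
    rw [zero_sub, neg_neg] at this
    exact this
  have hval : A 0 - B 0 = 0 := by
    rw [hAdef, hBdef]
    simp only [mul_zero, Real.cosh_zero, Real.sinh_zero, one_mul, zero_mul, sub_zero]
    ring
  -- slope tendsto on the right filter
  have hslope : Tendsto (fun σ => (A σ - B σ)/σ) (𝓝[>] (0:ℝ)) (𝓝 (κ*C₂)) := by
    have h := hAB.tendsto_slope_zero_right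
    apply h.congr'
    filter_upwards [self_mem_nhdsWithin] with σ hσ
    rw [zero_add, hval, sub_zero, smul_eq_mul]
    ring
  have hσ0 : Tendsto (fun σ : ℝ => σ) (𝓝[>] (0:ℝ)) (𝓝 0) :=
    tendsto_id.mono_left nhdsWithin_le_nhds
  -- eventual positivity of A - B
  have hev_pos : ∀ᶠ σ in 𝓝[>] (0:ℝ), 0 < A σ - B σ := by
    have hpos : (0:ℝ) < κ*C₂ := by positivity
    have h1 : ∀ᶠ σ in 𝓝[>] (0:ℝ), κ*C₂/2 < (A σ - B σ)/σ :=
      (tendsto_order.1 hslope).1 _ (by linarith)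
    filter_upwards [h1, self_mem_nhdsWithin] with σ h2 h3
    have hσp : 0 < σ := h3
    have h4 : 0 < (A σ - B σ)/σ := lt_trans (by positivity) h2
    have h5 : A σ - B σ = ((A σ - B σ)/σ)*σ := by field_simp
    rw [h5]; exact mul_pos h4 hσp
  -- u := A - B tends to 0 within the punctured filter
  have hu0 : Tendsto (fun σ => A σ - B σ) (𝓝[>] (0:ℝ)) (𝓝 0) := by
    have h1 : Tendsto (fun σ => (A σ - B σ)/σ * σ) (𝓝[>] (0:ℝ)) (𝓝 (κ*C₂ * 0)) :=
      hslope.mul hσ0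
    rw [mul_zero] at h1
    apply h1.congr'
    filter_upwards [self_mem_nhdsWithin] with σ hσ
    have : σ ≠ 0 := ne_of_gt hσ
    field_simp
  have hu : Tendsto (fun σ => A σ - B σ) (𝓝[>] (0:ℝ)) (𝓝[≠] (0:ℝ)) :=
    tendsto_into_punctured hu0 (by filter_upwards [hev_pos] with σ h; exact ne_of_gt h)
  have huslope : Tendsto (fun σ => (A σ - B σ)/σ) (𝓝[>] (0:ℝ)) (𝓝 (κ*C₂)) := hslope
  -- numerator limit
  have hpunct : Tendsto (fun σ : ℝ => σ) (𝓝[>] (0:ℝ)) (𝓝[≠] (0:ℝ)) :=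
    tendsto_into_punctured hσ0 (by
      filter_upwards [self_mem_nhdsWithin] with σ hσ; exact ne_of_gt hσ)
  have hkσ : Tendsto (fun σ : ℝ => κ*σ) (𝓝[>] (0:ℝ)) (𝓝[≠] (0:ℝ)) := by
    apply tendsto_into_punctured
    · have := hσ0.const_mul κ
      rwa [mul_zero] at this
    · filter_upwards [self_mem_nhdsWithin] with σ hσ
      have hσp : (0:ℝ) < σ := hσ
      exact ne_of_gt (mul_pos hκ hσp)
  have hT1 : Tendsto (fun σ : ℝ => (Real.cosh σ - 1)/σ^2) (𝓝[>] (0:ℝ)) (𝓝 (1/2)) :=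
    tendsto_cosh_sub_one_div_sq.comp hpunct
  have hT2 : Tendsto (fun σ : ℝ => (Real.cosh (κ*σ) - 1)/σ^2) (𝓝[>] (0:ℝ)) (𝓝 (κ^2/2)) := by
    have h1 := (tendsto_cosh_sub_one_div_sq.comp hkσ).mul_const (κ^2)
    have h2 : (1/2) * κ^2 = κ^2/2 := by ring
    rw [h2] at h1
    apply h1.congr'
    filter_upwards [self_mem_nhdsWithin] with σ hσ
    have hσne : σ ≠ 0 := ne_of_gt hσ
    have hκne : κ ≠ 0 := ne_of_gt hκ
    show (Real.cosh (κ*σ) - 1)/(κ*σ)^2 * κ^2 = (Real.cosh (κ*σ) - 1)/σ^2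
    field_simp
  have hT3 : Tendsto (fun σ : ℝ => (Real.cosh (A σ - B σ) - 1)/σ^2)
      (𝓝[>] (0:ℝ)) (𝓝 ((κ*C₂)^2/2)) := by
    have h1 := tendsto_cosh_sub_one_div_sq.comp hu
    have h2 := huslope.mul huslope
    have h3 := h1.mul h2
    have h4 : (1/2) * (κ*C₂ * (κ*C₂)) = (κ*C₂)^2/2 := by ring
    rw [h4] at h3
    apply h3.congr'
    filter_upwards [hev_pos, self_mem_nhdsWithin] with σ hp hσ
    have hσne : σ ≠ 0 := ne_of_gt hσ
    have hune : A σ - B σ ≠ 0 := ne_of_gt hp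
    show (Real.cosh (A σ - B σ) - 1)/(A σ - B σ)^2 * ((A σ - B σ)/σ * ((A σ - B σ)/σ))
        = (Real.cosh (A σ - B σ) - 1)/σ^2
    field_simp
  have hcoshκσ : Tendsto (fun σ : ℝ => Real.cosh (κ*σ)) (𝓝[>] (0:ℝ)) (𝓝 1) := by
    have h1 : Tendsto (fun σ : ℝ => κ*σ) (𝓝[>] (0:ℝ)) (𝓝 0) := by
      have := hσ0.const_mul κ; rwa [mul_zero] at this
    have h2 := (Real.continuous_cosh.tendsto 0).comp h1
    rwa [Real.cosh_zero] at h2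
  have hN : Tendsto (fun σ : ℝ =>
      (Real.cosh σ * Real.cosh (κ*σ) - Real.cosh (A σ - B σ))/σ^2)
      (𝓝[>] (0:ℝ)) (𝓝 ((1/2) * 1 + κ^2/2 - (κ*C₂)^2/2)) := by
    have h1 := (hT1.mul hcoshκσ).add hT2
    have h2 := h1.sub hT3
    apply h2.congr'
    filter_upwards [self_mem_nhdsWithin] with σ hσ
    have hσne : σ ≠ 0 := ne_of_gt hσ
    show (Real.cosh σ - 1)/σ^2 * Real.cosh (κ*σ) + (Real.cosh (κ*σ) - 1)/σ^2
        - (Real.cosh (A σ - B σ) - 1)/σ^2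
      = (Real.cosh σ * Real.cosh (κ*σ) - Real.cosh (A σ - B σ))/σ^2
    field_simp
    ring
  have hD : Tendsto (fun σ : ℝ => (Real.sinh σ * Real.sinh (κ*σ))/σ^2)
      (𝓝[>] (0:ℝ)) (𝓝 κ) := by
    have h1 := tendsto_sinh_div.comp hpunct
    have h2 := tendsto_sinh_div.comp hkσ
    have h3 := (h1.mul h2).mul_const κ
    rw [one_mul, one_mul] at h3
    apply h3.congr'
    filter_upwards [self_mem_nhdsWithin] with σ hσ
    have hσne : σ ≠ 0 := ne_of_gt hσ
    have hκne : κ ≠ 0 := ne_of_gt hκ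
    show Real.sinh σ / σ * (Real.sinh (κ*σ)/(κ*σ)) * κ = (Real.sinh σ * Real.sinh (κ*σ))/σ^2
    field_simp
  have hRatio : Tendsto (fun σ : ℝ =>
      (Real.cosh σ * Real.cosh (κ*σ) - Real.cosh (A σ - B σ))
        / (Real.sinh σ * Real.sinh (κ*σ)))
      (𝓝[>] (0:ℝ)) (𝓝 ((1 + κ^2*(1 - C₂^2))/(2*κ))) := by
    have h1 := hN.div hD (ne_of_gt hκ)
    have h2 : ((1/2) * 1 + κ^2/2 - (κ*C₂)^2/2) / κ = (1 + κ^2*(1 - C₂^2))/(2*κ) := by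
      field_simp
      ring
    rw [h2] at h1
    apply h1.congr'
    filter_upwards [self_mem_nhdsWithin] with σ hσ
    have hσp : (0:ℝ) < σ := hσ
    have hs1 : 0 < Real.sinh σ := Real.sinh_pos_iff.2 hσp
    have hs2 : 0 < Real.sinh (κ*σ) := Real.sinh_pos_iff.2 (by positivity)
    have hσne : σ^2 ≠ 0 := by positivity
    have hDne : Real.sinh σ * Real.sinh (κ*σ) ≠ 0 := by positivity
    show (Real.cosh σ * Real.cosh (κ*σ) - Real.cosh (A σ - B σ))/σ^2
        / ((Real.sinh σ * Real.sinh (κ*σ))/σ^2)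
      = (Real.cosh σ * Real.cosh (κ*σ) - Real.cosh (A σ - B σ))
        / (Real.sinh σ * Real.sinh (κ*σ))
    field_simp
  -- eventually Cs ≤ ratio
  have hev_le : ∀ᶠ σ in 𝓝[>] (0:ℝ), Cs ≤
      (Real.cosh σ * Real.cosh (κ*σ) - Real.cosh (A σ - B σ))
        / (Real.sinh σ * Real.sinh (κ*σ)) := by
    have hmem : Set.Ioo (0:ℝ) εmax ∈ 𝓝[>] (0:ℝ) := Ioo_mem_nhdsGT_of_mem ⟨le_refl 0, hε⟩
    filter_upwards [hev_pos, hmem] with σ hp hσmem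
    have hσ1 : 0 < σ := hσmem.1
    have hσ2 : σ < εmax := hσmem.2
    have hch := hchain σ hσ1 hσ2 hp
    have hs1 : 0 < Real.sinh σ := Real.sinh_pos_iff.2 hσ1
    have hs2 : 0 < Real.sinh (κ*σ) := Real.sinh_pos_iff.2 (by positivity)
    rw [le_div_iff₀ (by positivity)]
    nlinarith [hch]
  exact ge_of_tendsto hRatio hev_le

end CatAux

section QuadSec
open CatAux
set_option maxHeartbeats 1000000
variable {X : Type*} [MetricSpace X] {G : GeodesicStructure X}

/-- The CAT(-1) quadrilateral (projection) inequality. -/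
theorem quad_ineq (hX : G.IsCATNegOne) {y z x w : X} {tp tq : ℝ}
    (htp : tp ∈ Set.Icc (0:ℝ) (dist y z)) (htq : tq ∈ Set.Icc (0:ℝ) (dist y z))
    (hle : tp ≤ tq)
    (hnx : IsNearestPt (G.seg y z) x (G.geo y z tp))
    (hnw : IsNearestPt (G.seg y z) w (G.geo y z tq)) :
    Real.cosh (dist x (G.geo y z tp)) * Real.cosh (dist w (G.geo y z tq))
        * Real.cosh (tq - tp)
      - Real.sinh (dist x (G.geo y z tp)) * Real.sinh (dist w (G.geo y z tq))
      ≤ Real.cosh (dist x w) := by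
  set p := G.geo y z tp with hpdef
  set q := G.geo y z tq with hqdef
  have hpq : dist p q = tq - tp := by
    rw [hpdef, hqdef, G.geo_isom y z tp htp tq htq, abs_of_nonpos (by linarith)]
    ring
  have hΔ0 : 0 ≤ tq - tp := by linarith
  -- the two one-sided projection bounds
  have F1 : Real.cosh (dist x p) * Real.cosh (tq - tp) ≤ Real.cosh (dist x q) :=
    cosh_dist_nearest hX htp hnx htq
  have F2 : Real.cosh (dist w q) * Real.cosh (tq - tp) ≤ Real.cosh (dist w p) := by
    have h := cosh_dist_nearest hX htq hnw htp
    rwa [show tp - tq = -(tq - tp) by ring, Real.cosh_neg] at h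
  rcases eq_or_lt_of_le (dist_nonneg : (0:ℝ) ≤ dist x p) with hDx | hDx
  · -- x = p
    have hxp : x = p := dist_eq_zero.1 hDx.symm
    rw [← hDx, Real.cosh_zero, Real.sinh_zero, one_mul, zero_mul, sub_zero]
    calc Real.cosh (dist w q) * Real.cosh (tq - tp) ≤ Real.cosh (dist w p) := F2
      _ = Real.cosh (dist x w) := by rw [hxp, dist_comm]
  rcases eq_or_lt_of_le (dist_nonneg : (0:ℝ) ≤ dist w q) with hDw | hDw
  · -- w = q
    have hwq : w = q := dist_eq_zero.1 hDw.symm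
    rw [← hDw, Real.cosh_zero, Real.sinh_zero, mul_one, mul_zero, sub_zero]
    calc Real.cosh (dist x p) * Real.cosh (tq - tp) ≤ Real.cosh (dist x q) := F1
      _ = Real.cosh (dist x w) := by rw [hwq]
  rcases eq_or_lt_of_le hle with hteq | htlt
  · -- tp = tq
    have hpq2 : p = q := by rw [hpdef, hqdef, hteq]
    rw [← hteq, sub_self, Real.cosh_zero, mul_one]
    have h1 : Real.cosh (dist x p) * Real.cosh (dist w q)
        - Real.sinh (dist x p) * Real.sinh (dist w q)
        = Real.cosh (dist x p - dist w q) := (Real.cosh_sub _ _).symm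
    rw [h1]
    apply Real.cosh_le_cosh.2
    rw [abs_of_nonneg (dist_nonneg)]
    have h2 := abs_dist_sub_le x w p
    rw [hpq2] at h2 ⊢
    exact h2
  -- main case
  have hΔpos : 0 < tq - tp := by linarith
  have hdxp : 0 < dist p x := by rwa [dist_comm]
  have hdwq_le : dist w q ≤ dist w p := hnw.2 p (G.geo_mem_seg y z htp)
  have hdpw : 0 < dist p w := by rw [dist_comm]; linarith
  set C₂ := cmpCos (dist p w) (tq - tp) (dist w q) with hC₂def
  set Cs := cmpCos (dist p x) (dist p w) (dist x w) with hCsdef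
  have hCs1 : Cs ≤ 1 := by
    apply cmpCos_le_one dist_nonneg dist_nonneg
    have := abs_dist_sub_le x w p
    rw [dist_comm x p, dist_comm w p] at this
    exact this
  have hC₂1 : C₂ ≤ 1 := by
    apply cmpCos_le_one dist_nonneg hΔ0
    have := abs_dist_sub_le w q p
    rw [dist_comm w p, dist_comm q p, hpq] at this
    exact this
  have hsinhΔ : 0 < Real.sinh (tq - tp) := Real.sinh_pos_iff.2 hΔpos
  have hsinhdpw : 0 < Real.sinh (dist p w) := Real.sinh_pos_iff.2 hdpw
  have hsinhdx : 0 < Real.sinh (dist p x) := Real.sinh_pos_iff.2 hdxp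
  have hu_ge : Real.cosh (tq - tp) * Real.cosh (dist w q) ≤ Real.cosh (dist p w) := by
    rw [dist_comm p w]
    nlinarith [F2]
  have hC₂0 : 0 ≤ C₂ := by
    rw [hC₂def, cmpCos]
    apply div_nonneg _ (by positivity)
    have h1 : Real.cosh (dist w q) ≤ Real.cosh (dist p w) := by
      apply Real.cosh_le_cosh.2
      rw [abs_of_nonneg dist_nonneg, abs_of_nonneg dist_nonneg, dist_comm p w]
      exact hdwq_le
    nlinarith [Real.one_le_cosh (tq - tp), Real.cosh_pos (dist w q)]
  -- the per-κ bound from the abstract limit lemma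
  have hperk : ∀ κ : ℝ, 0 < κ → Cs ≤ (1 + κ^2*(1 - C₂^2))/(2*κ) := by
    intro κ hκ
    have hεpos : 0 < min (dist p x) (dist p w / κ) := by
      apply lt_min hdxp
      positivity
    apply abstract_limit hΔpos hC₂0 hC₂1 hCs1 hκ hεpos
    intro σ hσ0 hσε hpos
    have hσx : σ ≤ dist p x := le_of_lt (lt_of_lt_of_le hσε (min_le_left _ _))
    have hκσw : κ*σ ≤ dist p w := by
      have h1 : σ < dist p w / κ := lt_of_lt_of_le hσε (min_le_right _ _)
      rw [lt_div_iff₀ hκ] at h1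
      nlinarith
    have hκσ0 : 0 ≤ κ*σ := by positivity
    -- the comparison on the two geodesics from p
    have hkey := hX p x w σ ⟨hσ0.le, hσx⟩ (κ*σ) ⟨hκσ0, hκσw⟩
    have hU1 : 1 ≤ Real.cosh σ * Real.cosh (κ*σ) - Real.sinh σ * Real.sinh (κ*σ) * Cs := by
      have h1 : Real.sinh σ * Real.sinh (κ*σ) * Cs ≤ Real.sinh σ * Real.sinh (κ*σ) :=
        mul_le_of_le_one_right
          (mul_nonneg (Real.sinh_nonneg_iff.2 hσ0.le) (Real.sinh_nonneg_iff.2 hκσ0)) hCs1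
      have h2 := Real.one_le_cosh (σ - κ*σ)
      rw [Real.cosh_sub] at h2
      linarith
    have e1 : Real.cosh (dist (G.geo p x σ) (G.geo p w (κ*σ)))
        ≤ Real.cosh σ * Real.cosh (κ*σ) - Real.sinh σ * Real.sinh (κ*σ) * Cs :=
      cosh_le_of_le_arcosh hU1 hkey dist_nonneg
    -- χ's nearest point on the segment is p
    have hd1 : dist (G.geo p x σ) p = σ := G.dist_geo_left p x ⟨hσ0.le, hσx⟩
    have hd2 : dist (G.geo p x σ) x = dist p x - σ := G.dist_geo_right p x ⟨hσ0.le, hσx⟩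
    have hχnear : IsNearestPt (G.seg y z) (G.geo p x σ) (G.geo y z tp) := by
      constructor
      · exact G.geo_mem_seg y z htp
      · intro u hu
        have h1 := hnx.2 u hu
        have h2 := dist_triangle x (G.geo p x σ) u
        have h3 : dist x (G.geo p x σ) = dist p x - σ := by rw [dist_comm]; exact hd2
        have h4 : dist x p = dist p x := dist_comm x p
        rw [← hpdef]
        rw [show dist (G.geo p x σ) p = σ from hd1]
        linarith
    have e2 : _root_.arcosh (Real.cosh σ * Real.cosh (tq - tp)) ≤ dist (G.geo p x σ) q := by
      have hq1 := cosh_dist_nearest hX htp hχnear htq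
      rw [← hpdef, hd1, ← hqdef] at hq1
      have h1 : (1:ℝ) ≤ Real.cosh σ * Real.cosh (tq - tp) := by
        nlinarith [Real.one_le_cosh σ, Real.one_le_cosh (tq - tp)]
      apply le_of_cosh_le_cosh (CatAux.arcosh_nonneg h1) dist_nonneg
      rw [CatAux.cosh_arcosh h1]
      exact hq1
    have e3 : dist (G.geo p w (κ*σ)) q
        ≤ _root_.arcosh (Real.cosh (κ*σ) * Real.cosh (tq - tp)
            - Real.sinh (κ*σ) * Real.sinh (tq - tp) * C₂) := by
      have hkey2 := hX p w q (κ*σ) ⟨hκσ0, hκσw⟩ (dist p q) ⟨dist_nonneg, le_refl _⟩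
      rw [G.geo_end p q, hpq] at hkey2
      exact hkey2
    -- combine
    have e4 : _root_.arcosh (Real.cosh σ * Real.cosh (tq - tp))
        - _root_.arcosh (Real.cosh (κ*σ) * Real.cosh (tq - tp)
            - Real.sinh (κ*σ) * Real.sinh (tq - tp) * C₂)
        ≤ dist (G.geo p x σ) (G.geo p w (κ*σ)) := by
      have h1 := dist_triangle (G.geo p x σ) (G.geo p w (κ*σ)) q
      linarith [e2, e3]
    have e5 : Real.cosh (_root_.arcosh (Real.cosh σ * Real.cosh (tq - tp))
        - _root_.arcosh (Real.cosh (κ*σ) * Real.cosh (tq - tp)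
            - Real.sinh (κ*σ) * Real.sinh (tq - tp) * C₂))
        ≤ Real.cosh (dist (G.geo p x σ) (G.geo p w (κ*σ))) := by
      apply Real.cosh_le_cosh.2
      rw [abs_of_pos hpos, abs_of_nonneg dist_nonneg]
      exact e4
    linarith [e1, e5]
  -- conclude Cs ≤ √(1 - C₂²)
  have hs2 : 0 ≤ 1 - C₂^2 := by nlinarith
  have hCsle : Cs ≤ Real.sqrt (1 - C₂^2) := by
    rcases eq_or_lt_of_le hs2 with hz | hz
    · rw [← hz, Real.sqrt_zero]
      by_contra hcon
      push_neg at hcon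
      have h1 := hperk (1/Cs) (one_div_pos.2 hcon)
      rw [← hz] at h1
      have h2 : (1 + (1/Cs)^2*0)/(2*(1/Cs)) = Cs/2 := by
        field_simp
        ring
      rw [h2] at h1
      linarith
    · have hsq : 0 < Real.sqrt (1 - C₂^2) := Real.sqrt_pos.2 hz
      have h3 : Real.sqrt (1 - C₂^2) ^ 2 = 1 - C₂^2 := Real.sq_sqrt hs2
      have h1 := hperk (1/Real.sqrt (1 - C₂^2)) (one_div_pos.2 hsq)
      have e1 : (1/Real.sqrt (1 - C₂^2))^2 * (1 - C₂^2) = 1 := by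
        rw [one_div, inv_pow, h3]
        exact inv_mul_cancel₀ (ne_of_gt hz)
      have h2 : (1 + (1/Real.sqrt (1 - C₂^2))^2*(1 - C₂^2))/(2*(1/Real.sqrt (1 - C₂^2)))
          = Real.sqrt (1 - C₂^2) := by
        rw [e1, div_eq_iff (by positivity : (2*(1/Real.sqrt (1 - C₂^2))) ≠ 0)]
        field_simp
        norm_num
      rwa [h2] at h1
  -- final algebra
  have hCsprod : Real.sinh (dist p x) * Real.sinh (dist p w) * Cs
      = Real.cosh (dist p x) * Real.cosh (dist p w) - Real.cosh (dist x w) := by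
    rw [hCsdef, cmpCos]
    field_simp
  have hnum : Real.sinh (dist p w) * Real.sinh (tq - tp) * C₂
      = Real.cosh (dist p w) * Real.cosh (tq - tp) - Real.cosh (dist w q) := by
    rw [hC₂def, cmpCos]
    field_simp
  have hWle : Real.sinh (dist p w) * Real.sqrt (1 - C₂^2) ≤ Real.sinh (dist w q) := by
    have hW0 : 0 ≤ Real.sinh (dist p w) * Real.sqrt (1 - C₂^2) := by positivity
    have hsDw : 0 ≤ Real.sinh (dist w q) := Real.sinh_nonneg_iff.2 dist_nonneg
    have hWsq : (Real.sinh (dist p w) * Real.sqrt (1 - C₂^2))^2 * Real.sinh (tq - tp)^2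
        = Real.sinh (tq - tp)^2 * Real.sinh (dist w q)^2
          - (Real.cosh (dist p w) - Real.cosh (tq - tp) * Real.cosh (dist w q))^2 := by
      have h3 : Real.sqrt (1 - C₂^2) ^ 2 = 1 - C₂^2 := Real.sq_sqrt hs2
      have h4 : (Real.sinh (dist p w) * Real.sinh (tq - tp) * C₂)^2
          = (Real.cosh (dist p w) * Real.cosh (tq - tp) - Real.cosh (dist w q))^2 := by
        rw [hnum]
      have h5 := Real.sinh_sq (dist p w)
      have h6 := Real.sinh_sq (tq - tp)
      have h7 := Real.sinh_sq (dist w q)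
      calc (Real.sinh (dist p w) * Real.sqrt (1 - C₂^2))^2 * Real.sinh (tq - tp)^2
          = (Real.sinh (dist p w)^2 * Real.sinh (tq - tp)^2)
            - (Real.sinh (dist p w) * Real.sinh (tq - tp) * C₂)^2 := by
            rw [mul_pow, h3]; ring
        _ = (Real.sinh (dist p w)^2 * Real.sinh (tq - tp)^2)
            - (Real.cosh (dist p w) * Real.cosh (tq - tp) - Real.cosh (dist w q))^2 := by
            rw [h4]
        _ = Real.sinh (tq - tp)^2 * Real.sinh (dist w q)^2
            - (Real.cosh (dist p w) - Real.cosh (tq - tp) * Real.cosh (dist w q))^2 := by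
            rw [h5, h6, h7]; ring
    have hsq2 : (Real.sinh (dist p w) * Real.sqrt (1 - C₂^2))^2
        ≤ Real.sinh (dist w q)^2 := by
      have hSpos : 0 < Real.sinh (tq - tp)^2 := by positivity
      nlinarith [hWsq, hSpos,
        sq_nonneg (Real.cosh (dist p w) - Real.cosh (tq - tp) * Real.cosh (dist w q))]
    nlinarith [hW0, hsDw, hsq2]
  -- assemble
  have hfin : Real.cosh (dist x w)
      = Real.cosh (dist p x) * Real.cosh (dist p w)
        - Real.sinh (dist p x) * (Real.sinh (dist p w) * Cs) := by
    nlinarith [hCsprod]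
  have hstep1 : Real.sinh (dist p x) * (Real.sinh (dist p w) * Cs)
      ≤ Real.sinh (dist p x) * (Real.sinh (dist p w) * Real.sqrt (1 - C₂^2)) := by
    apply mul_le_mul_of_nonneg_left _ hsinhdx.le
    exact mul_le_mul_of_nonneg_left hCsle hsinhdpw.le
  have hstep2 : Real.sinh (dist p x) * (Real.sinh (dist p w) * Real.sqrt (1 - C₂^2))
      ≤ Real.sinh (dist p x) * Real.sinh (dist w q) :=
    mul_le_mul_of_nonneg_left hWle hsinhdx.le
  have hmono : Real.cosh (dist p x) * (Real.cosh (tq - tp) * Real.cosh (dist w q))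
      ≤ Real.cosh (dist p x) * Real.cosh (dist p w) :=
    mul_le_mul_of_nonneg_left hu_ge (Real.cosh_pos _).le
  rw [dist_comm x p]
  nlinarith [hfin, hstep1, hstep2, hmono]

end QuadSec

section FinalAux
open CatAux
variable {X : Type*} [MetricSpace X] {G : GeodesicStructure X}

theorem exp_le_cosh_add_log_two (g : ℝ) (hg : 0 ≤ g) :
    Real.exp g ≤ Real.cosh (g + Real.log 2) := by
  rw [Real.cosh_eq, Real.exp_add, Real.exp_log (by norm_num : (0:ℝ) < 2)]
  have := Real.exp_pos (-(g + Real.log 2))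
  nlinarith [Real.exp_pos g]

/-- Fact 1 in distance form. -/
theorem dist_gromov_pt_le (hX : G.IsCATNegOne) (x y z : X) :
    dist x (G.geo y z (gp y x z)) ≤ gp x y z + Real.log 2 := by
  have h := cosh_dist_gromov_pt hX x y z
  have hg := gp_nonneg x y z
  have hlog2 : (0:ℝ) ≤ Real.log 2 := Real.log_nonneg (by norm_num)
  apply le_of_cosh_le_cosh dist_nonneg (by positivity)
  exact le_trans h (exp_le_cosh_add_log_two _ hg)

theorem log_two_lt_one : Real.log 2 < 1 := by
  have h := Real.log_two_lt_d9
  linarith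

end FinalAux

set_option maxHeartbeats 1000000 in
/-- **Shadows and alignment** (Lemma 2.8).  Let `X` be a proper geodesic CAT(−1) space,
with shadows `O_R(x,y) = {w : d([x,w], y) < R}`.
(1) For every `R > 1` and `x, y, z, w ∈ X`, if `w ∈ O_R(x,y) ∩ O_R(y,z)` then
`(x, [y,z], w)` is `6R`-aligned.
(2) For every `R > 1` and `x, y, z, w ∈ X`, if `(x, [y,z], w)` is `R`-aligned and
`d(y,z) > 3R`, then `w ∈ O_{3R}(x,y) ∩ O_{3R}(y,z)`. -/
theorem shadows_and_alignment
    {X : Type*} [MetricSpace X] [ProperSpace X]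
    (G : GeodesicStructure X) (hX : G.IsCATNegOne) :
    (∀ R : ℝ, 1 < R → ∀ x y z w : X,
        Metric.infDist y (G.seg x w) < R → Metric.infDist z (G.seg y w) < R →
        AlignedTriple G x y z w (6 * R)) ∧
    (∀ R : ℝ, 1 < R → ∀ x y z w : X,
        AlignedTriple G x y z w R → 3 * R < dist y z →
        Metric.infDist y (G.seg x w) < 3 * R ∧ Metric.infDist z (G.seg y w) < 3 * R) := by
  have hlog2 : Real.log 2 < 1 := log_two_lt_one
  have hlog2' : (0:ℝ) ≤ Real.log 2 := Real.log_nonneg (by norm_num)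
  constructor
  · -- Part (1)
    intro R hR x y z w h1 h2
    rw [Metric.infDist_lt_iff (G.seg_nonempty x w)] at h1
    rw [Metric.infDist_lt_iff (G.seg_nonempty y w)] at h2
    obtain ⟨u, huseg, hu⟩ := h1
    obtain ⟨v, hvseg, hv⟩ := h2
    have hgyxw : gp y x w < R :=
      lt_of_le_of_lt (gp_le_of_between (G.mem_seg_sum_dist huseg)) hu
    have hgzyw : gp z y w < R :=
      lt_of_le_of_lt (gp_le_of_between (G.mem_seg_sum_dist hvseg)) hv
    have hgyzw : dist y z - R < gp y z w := by
      have hid := gp_add_gp y z w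
      linarith
    obtain ⟨tp, htp, hnear⟩ := G.exists_nearest x y z
    obtain ⟨tq, htq, hnearw⟩ := G.exists_nearest w y z
    constructor
    · -- AlignedLeft
      refine ⟨G.geo y z tp, hnear, ?_⟩
      rw [G.dist_geo_left y z htp]
      rcases lt_or_ge (dist y z) (6*R) with hcase | hcase
      · linarith [htp.2]
      · -- main case: first show gp y x z < R + 1
        have hgp5R : 5*R < gp y z w := by linarith
        have hkey : gp y x z < R + 1 := by
          by_contra hcon
          push_neg at hcon
          have ht0 : (0:ℝ) ≤ R + 1 := by linarith
          have htleb : R + 1 ≤ dist y x := le_trans hcon (gp_le_left y x z)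
          have htlew : R + 1 ≤ dist y w := le_trans (by linarith) (gp_le_right y z w)
          have hT1 := dist_geo_geo_le hX y x z (t := R+1) ht0 hcon
          have hT2 := dist_geo_geo_le hX y z w (t := R+1) ht0 (by linarith)
          have d1 : dist x (G.geo y x (R+1)) = dist y x - (R+1) := by
            rw [dist_comm]
            exact G.dist_geo_right y x ⟨ht0, htleb⟩
          have d3 : dist (G.geo y w (R+1)) w = dist y w - (R+1) :=
            G.dist_geo_right y w ⟨ht0, htlew⟩
          have hchain : dist x w ≤ (dist y x - (R+1)) + Real.exp ((R+1) - gp y x z)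
              + Real.exp ((R+1) - gp y z w) + (dist y w - (R+1)) := by
            have t1 := dist_triangle x (G.geo y x (R+1)) w
            have t2 := dist_triangle (G.geo y x (R+1)) (G.geo y z (R+1)) w
            have t3 := dist_triangle (G.geo y z (R+1)) (G.geo y w (R+1)) w
            linarith [hT1, hT2, d1, d3]
          have hexp1 : Real.exp ((R+1) - gp y x z) ≤ 1 :=
            Real.exp_le_one_iff.2 (by linarith)
          have hexp2 : Real.exp ((R+1) - gp y z w) < 1 := by
            rw [Real.exp_lt_one_iff]
            linarith
          have : R ≤ gp y x w := by
            rw [gp]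
            linarith
          linarith
        -- now use Fact 1 and minimality
        have hsmem : gp y x z ∈ Set.Icc (0:ℝ) (dist y z) :=
          ⟨gp_nonneg y x z, gp_le_right y x z⟩
        have hF1 := dist_gromov_pt_le hX x y z
        have hmin := hnear.2 (G.geo y z (gp y x z)) (G.geo_mem_seg y z hsmem)
        have hlow : dist x z ≤ dist x (G.geo y z tp) + (dist y z - tp) := by
          have t1 := dist_triangle x (G.geo y z tp) z
          rw [G.dist_geo_right y z htp] at t1
          linarith
        have hident : dist y z - dist x z + gp x y z + Real.log 2
            = gp y x z + Real.log 2 := by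
          rw [gp, gp, dist_comm x y]
          ring
        have : tp ≤ gp y x z + Real.log 2 := by
          rw [← hident]
          linarith
        linarith
    · -- AlignedRight
      refine ⟨G.geo y z tq, hnearw, ?_⟩
      rw [G.dist_geo_right y z htq]
      have hsmem : gp y w z ∈ Set.Icc (0:ℝ) (dist y z) :=
        ⟨gp_nonneg y w z, gp_le_right y w z⟩
      have hF1 := dist_gromov_pt_le hX w y z
      have hmin := hnearw.2 (G.geo y z (gp y w z)) (G.geo_mem_seg y z hsmem)
      have hlow : dist w y ≤ dist w (G.geo y z tq) + tq := by
        have t1 := dist_triangle w (G.geo y z tq) y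
        rw [G.dist_geo_left y z htq] at t1
        linarith
      have hident : dist w y - (gp w y z + Real.log 2) = gp y w z - Real.log 2 := by
        rw [gp, gp, dist_comm w y, dist_comm w z]
        ring
      have htqge : gp y w z - Real.log 2 ≤ tq := by
        rw [← hident]
        linarith
      have hident2 : dist y z - gp y w z = gp z y w := by
        rw [gp, gp, dist_comm y w, dist_comm z y, dist_comm z w, dist_comm w z]
        ring
      have : dist y z - tq ≤ gp z y w + Real.log 2 := by
        rw [← hident2]
        linarith
      linarith
  · -- Part (2)
    intro R hR x y z w htrip ha
    obtain ⟨⟨p0, hnp, hpy⟩, ⟨q0, hnq, hqz⟩⟩ := htrip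
    obtain ⟨tp, htp, hp0⟩ := hnp.1
    obtain ⟨tq, htq, hq0⟩ := hnq.1
    rw [← hp0] at hnp hpy
    rw [← hq0] at hnq hqz
    rw [G.dist_geo_left y z htp] at hpy
    rw [G.dist_geo_right y z htq] at hqz
    -- hpy : tp < R,  hqz : dist y z - tq < R
    have htlt : tp ≤ tq := by linarith
    have hΔR : R < tq - tp := by linarith
    have hquad := quad_ineq hX htp htq htlt hnp hnq
    have hER : Real.exp 1 ≤ Real.exp R := Real.exp_le_exp.2 (le_of_lt hR)
    have hE1 : (2.7182818283:ℝ) < Real.exp 1 := Real.exp_one_gt_d9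
    constructor
    · -- infDist y (seg x w) < 3R
      set Dx := dist x (G.geo y z tp) with hDxdef
      set Dw := dist w (G.geo y z tq) with hDwdef
      have hDx0 : 0 ≤ Dx := dist_nonneg
      have hDw0 : 0 ≤ Dw := dist_nonneg
      have hΔ0 : (0:ℝ) ≤ tq - tp := by linarith
      -- exp (dist x w) ≥ 2M - 1
      have hcoshM : Real.cosh Dx * Real.cosh Dw * Real.cosh (tq - tp)
          - Real.sinh Dx * Real.sinh Dw ≤ Real.cosh (dist x w) := hquad
      have hexpd : 2 * (Real.cosh Dx * Real.cosh Dw * Real.cosh (tq - tp)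
          - Real.sinh Dx * Real.sinh Dw) - 1 ≤ Real.exp (dist x w) := by
        have h1 : Real.exp (dist x w) = 2 * Real.cosh (dist x w) - Real.exp (-(dist x w)) := by
          rw [Real.cosh_eq]; ring
        have h2 : Real.exp (-(dist x w)) ≤ 1 :=
          Real.exp_le_one_iff.2 (by linarith [dist_nonneg (x := x) (y := w)])
        linarith
      -- lower bound 2M - 1
      have hMlow : Real.exp (Dx + Dw + (tq - tp)) * (1 - Real.exp (-(tq-tp)))^2 / 4
          ≤ 2 * (Real.cosh Dx * Real.cosh Dw * Real.cosh (tq - tp)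
            - Real.sinh Dx * Real.sinh Dw) - 1 := by
        have hcc : Real.cosh Dx * Real.cosh Dw * Real.cosh (tq - tp)
            - Real.sinh Dx * Real.sinh Dw
            = Real.cosh Dx * Real.cosh Dw * (Real.cosh (tq - tp) - 1)
              + Real.cosh (Dx - Dw) := by
          rw [Real.cosh_sub Dx Dw]; ring
        have h1 : (1:ℝ) ≤ Real.cosh (Dx - Dw) := Real.one_le_cosh _
        have h2 : Real.exp Dx / 2 ≤ Real.cosh Dx := by
          rw [Real.cosh_eq]; have := Real.exp_pos (-Dx); linarith
        have h3 : Real.exp Dw / 2 ≤ Real.cosh Dw := by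
          rw [Real.cosh_eq]; have := Real.exp_pos (-Dw); linarith
        have h4 : Real.exp (tq - tp) * (1 - Real.exp (-(tq-tp)))^2 / 2
            = Real.cosh (tq - tp) - 1 := by
          rw [Real.cosh_eq]
          have e1 : Real.exp (tq-tp) * Real.exp (-(tq-tp)) = 1 := by
            rw [← Real.exp_add]; norm_num
          linear_combination ((Real.exp (-(tq-tp)) - 2)/2) * e1
        have h5 : (0:ℝ) ≤ Real.cosh (tq-tp) - 1 := by linarith [Real.one_le_cosh (tq-tp)]
        have h6 : Real.exp Dx / 2 * (Real.exp Dw / 2) * (Real.cosh (tq-tp) - 1)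
            ≤ Real.cosh Dx * Real.cosh Dw * (Real.cosh (tq-tp) - 1) := by
          apply mul_le_mul_of_nonneg_right _ h5
          exact mul_le_mul h2 h3 (by positivity) (Real.cosh_pos Dx).le
        have h7 : Real.exp (Dx + Dw + (tq - tp)) * (1 - Real.exp (-(tq-tp)))^2 / 4
            = 2 * (Real.exp Dx / 2 * (Real.exp Dw / 2)
              * (Real.exp (tq - tp) * (1 - Real.exp (-(tq-tp)))^2 / 2)) := by
          rw [Real.exp_add, Real.exp_add]
          ring
        rw [h7, hcc, h4]
        nlinarith [h6]
      -- distance bounds through the projections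
      have hyx : dist y x ≤ tp + Dx := by
        have t1 := dist_triangle y (G.geo y z tp) x
        have t2 : dist y (G.geo y z tp) = tp := by
          rw [dist_comm]; exact G.dist_geo_left y z htp
        rw [hDxdef, dist_comm x (G.geo y z tp)]
        linarith
      have hyw : dist y w ≤ tq + Dw := by
        have t1 := dist_triangle y (G.geo y z tq) w
        have t2 : dist y (G.geo y z tq) = tq := by
          rw [dist_comm]; exact G.dist_geo_left y z htq
        rw [hDwdef, dist_comm w (G.geo y z tq)]
        linarith
      -- the witness point
      have hgmem : gp x y w ∈ Set.Icc (0:ℝ) (dist x w) := ⟨gp_nonneg x y w, gp_le_right x y w⟩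
      have hwit := dist_gromov_pt_le hX y x w
      have hmem : G.geo x w (gp x y w) ∈ G.seg x w := G.geo_mem_seg x w hgmem
      have hinf := Metric.infDist_le_dist_of_mem (x := y) hmem
      -- numeric endgame: gp y x w + log 2 < 3R
      have hgoal : gp y x w + Real.log 2 < 3*R := by
        -- exp (2 * gp y x w) * (exp (dist x w)) = exp (dist y x + dist y w)
        have hexp2gp : Real.exp (2 * gp y x w) * Real.exp (dist x w)
            = Real.exp (dist y x + dist y w) := by
          rw [← Real.exp_add, gp]
          congr 1
          ring
        set Q := Real.exp (dist x w) with hQdef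
        have hQpos : 0 < Q := Real.exp_pos _
        set P := Real.exp (Dx + Dw + (tq - tp)) * (1 - Real.exp (-(tq-tp)))^2 / 4 with hPdef
        have hPQ : P ≤ Q := le_trans hMlow (le_trans hexpd (le_refl _))
        have hPpos : 0 < P := by
          rw [hPdef]
          have he : Real.exp (-(tq-tp)) < 1 := Real.exp_lt_one_iff.2 (by linarith)
          have h9 : 0 < (1 - Real.exp (-(tq-tp)))^2 :=
            pow_pos (by linarith) 2
          exact div_pos (mul_pos (Real.exp_pos _) h9) (by norm_num)
        have hup : Real.exp (2 * gp y x w) ≤ Real.exp (dist y x + dist y w) / P := by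
          rw [le_div_iff₀ hPpos]
          calc Real.exp (2 * gp y x w) * P ≤ Real.exp (2 * gp y x w) * Q := by
                apply mul_le_mul_of_nonneg_left hPQ (Real.exp_pos _).le
            _ = Real.exp (dist y x + dist y w) := hexp2gp
        have hup2 : Real.exp (dist y x + dist y w) / P
            ≤ 4 * Real.exp (2*tp) / (1 - Real.exp (-(tq-tp)))^2 := by
          have he : Real.exp (-(tq-tp)) < 1 := Real.exp_lt_one_iff.2 (by linarith)
          have h9 : 0 < (1 - Real.exp (-(tq-tp)))^2 :=
            pow_pos (by linarith) 2
          rw [hPdef, div_le_div_iff₀ (div_pos (mul_pos (Real.exp_pos _) h9) (by norm_num)) h9]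
          have hnum : Real.exp (dist y x + dist y w) ≤ Real.exp (tp + Dx + (tq + Dw)) := by
            apply Real.exp_le_exp.2
            linarith
          have hfact : Real.exp (tp + Dx + (tq + Dw))
              = Real.exp (2*tp) * Real.exp (Dx + Dw + (tq - tp)) := by
            rw [← Real.exp_add]
            congr 1
            ring
          calc Real.exp (dist y x + dist y w) * (1 - Real.exp (-(tq-tp)))^2
              ≤ Real.exp (2*tp) * Real.exp (Dx + Dw + (tq - tp))
                  * (1 - Real.exp (-(tq-tp)))^2 := by
                rw [← hfact]
                exact mul_le_mul_of_nonneg_right hnum h9.le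
            _ = 4 * Real.exp (2*tp)
                  * (Real.exp (Dx + Dw + (tq - tp)) * (1 - Real.exp (-(tq-tp)))^2 / 4) := by
                ring
        -- final numeric inequality
        have hfin : 4 * Real.exp (2*tp) / (1 - Real.exp (-(tq-tp)))^2
            < Real.exp (2 * (3*R) - 2 * Real.log 2) := by
          have he : Real.exp (-(tq-tp)) < Real.exp (-R) := Real.exp_lt_exp.2 (by linarith)
          have heR : Real.exp (-R) < 1 := Real.exp_lt_one_iff.2 (by linarith)
          have het : Real.exp (-(tq-tp)) < 1 := lt_trans he heR
          have h9 : 0 < (1 - Real.exp (-(tq-tp)))^2 :=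
            pow_pos (by linarith) 2
          have h10 : (1 - Real.exp (-R))^2 < (1 - Real.exp (-(tq-tp)))^2 := by
            have hpos1 : 0 < 1 - Real.exp (-R) := by linarith
            nlinarith [he, heR, Real.exp_pos (-(tq-tp)), Real.exp_pos (-R)]
          rw [div_lt_iff₀ h9]
          have hkey : 4 * Real.exp (2*R) ≤ Real.exp (2 * (3*R) - 2 * Real.log 2)
              * (1 - Real.exp (-R))^2 := by
            have hE : Real.exp 1 ≤ Real.exp R := hER
            have e1 : Real.exp (2 * (3*R) - 2 * Real.log 2)
                = Real.exp R ^ 6 / 4 := by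
              rw [show 2*(3*R) - 2*Real.log 2 = 6*R - Real.log 4 by
                rw [show (4:ℝ) = 2^2 by norm_num, Real.log_pow]
                push_cast
                ring]
              rw [Real.exp_sub, Real.exp_log (by norm_num : (0:ℝ) < 4)]
              congr 1
              rw [show (6:ℝ)*R = R+R+R+R+R+R by ring]
              rw [Real.exp_add, Real.exp_add, Real.exp_add, Real.exp_add, Real.exp_add]
              ring
            have e2 : Real.exp (-R) = 1 / Real.exp R := by
              rw [Real.exp_neg]; ring
            have e3 : Real.exp (2*R) = Real.exp R ^ 2 := by
              rw [show (2:ℝ)*R = R + R by ring, Real.exp_add]; ring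
            rw [e1, e2, e3]
            have hEpos : 0 < Real.exp R := Real.exp_pos R
            have hE27 : (2.7182818283:ℝ) < Real.exp R := lt_of_lt_of_le hE1 hER
            rw [div_mul_eq_mul_div, le_div_iff₀ (by norm_num : (0:ℝ) < 4)]
            have h4le : 4 ≤ Real.exp R ^ 2 - Real.exp R := by nlinarith [hE27]
            have hkey2 : 16 ≤ (Real.exp R ^ 2 - Real.exp R)^2 := by nlinarith [h4le]
            have hexpand : Real.exp R ^ 6 * (1 - 1/Real.exp R)^2
                = Real.exp R ^ 2 * (Real.exp R ^ 2 - Real.exp R)^2 := by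
              field_simp
            rw [hexpand]
            calc 4 * Real.exp R ^ 2 * 4 = 16 * Real.exp R ^ 2 := by ring
              _ ≤ (Real.exp R ^ 2 - Real.exp R)^2 * Real.exp R ^ 2 :=
                  mul_le_mul_of_nonneg_right hkey2 (by positivity)
              _ = Real.exp R ^ 2 * (Real.exp R ^ 2 - Real.exp R)^2 := by ring
          calc 4 * Real.exp (2*tp) < 4 * Real.exp (2*R) := by
                have := Real.exp_lt_exp.2 (show 2*tp < 2*R by linarith)
                linarith
            _ ≤ Real.exp (2 * (3*R) - 2 * Real.log 2) * (1 - Real.exp (-R))^2 := hkey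
            _ ≤ Real.exp (2 * (3*R) - 2 * Real.log 2) * (1 - Real.exp (-(tq-tp)))^2 := by
                apply mul_le_mul_of_nonneg_left (le_of_lt h10) (Real.exp_pos _).le
        have hchain2 : Real.exp (2 * gp y x w) < Real.exp (2*(3*R) - 2*Real.log 2) :=
          lt_of_le_of_lt (le_trans hup hup2) hfin
        have := Real.exp_lt_exp.1 hchain2
        linarith
      calc Metric.infDist y (G.seg x w) ≤ dist y (G.geo x w (gp x y w)) := hinf
        _ ≤ gp y x w + Real.log 2 := hwit
        _ < 3*R := hgoal
    · -- infDist z (seg y w) < 3R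
      have hsmem : gp y w z ∈ Set.Icc (0:ℝ) (dist y z) :=
        ⟨gp_nonneg y w z, gp_le_right y w z⟩
      have hF1 := dist_gromov_pt_le hX w y z
      have hmin := hnq.2 (G.geo y z (gp y w z)) (G.geo_mem_seg y z hsmem)
      have hlow : dist w z ≤ dist w (G.geo y z tq) + (dist y z - tq) := by
        have t1 := dist_triangle w (G.geo y z tq) z
        rw [G.dist_geo_right y z htq] at t1
        linarith
      have hident : dist w z - (gp w y z + Real.log 2) = gp z y w - Real.log 2 := by
        rw [gp, gp, dist_comm w y, dist_comm w z, dist_comm z y]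
        ring
      have hgz : gp z y w < R + Real.log 2 := by
        have h1 : gp z y w - Real.log 2 ≤ dist y z - tq := by
          rw [← hident]
          linarith
        linarith
      have hgmem : gp y z w ∈ Set.Icc (0:ℝ) (dist y w) := ⟨gp_nonneg y z w, gp_le_right y z w⟩
      have hwit := dist_gromov_pt_le hX z y w
      have hmem : G.geo y w (gp y z w) ∈ G.seg y w := G.geo_mem_seg y w hgmem
      have hinf := Metric.infDist_le_dist_of_mem (x := z) hmem
      calc Metric.infDist z (G.seg y w) ≤ dist z (G.geo y w (gp y z w)) := hinf
        _ ≤ gp z y w + Real.log 2 := hwit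
        _ < R + 2*Real.log 2 := by linarith
        _ ≤ 3*R := by linarith

end
end
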